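/- arXiv:1403.3106 — 5 statements merged into one kernel-verified Lean document; each statement's English description precedes it below -/
import Mathlib

section
/- A separable metrisable topological group G admits a metrically proper compatible left-invariant metric if and only if G has the local property (OB), i.e., there is a neighbourhood of the identity having property (OB) relative to G. -/
open Filter Topology
open scoped Pointwise

/-- A (plain) metric given as a distance function. -/
def IsMetric {G : Type*} (d : G → G → ℝ) : Prop :=
  (∀ x y, d x y = 0 ↔ x = y) ∧ (∀ x y, d x y = d y x) ∧ ∀ x y z, d x z ≤ d x y + d y z

/-- The metric `d` induces the topology of `G`. -/
def IsCompatible (G : Type*) [TopologicalSpace G] (d : G → G → ℝ) : Prop :=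
  ∀ (x : G) (s : Set G), s ∈ nhds x ↔ ∃ ε > (0 : ℝ), {y : G | d x y < ε} ⊆ s

/-- A compatible left-invariant metric on a topological group. -/
def IsCompatibleLeftInvariantMetric (G : Type*) [Group G] [TopologicalSpace G]
    (d : G → G → ℝ) : Prop :=
  IsMetric d ∧ IsCompatible G d ∧ ∀ h g f : G, d (h * g) (h * f) = d g f

/-- A set has finite diameter with respect to `d`. -/
def FiniteDiam {G : Type*} (d : G → G → ℝ) (A : Set G) : Prop :=
  ∃ C : ℝ, ∀ x ∈ A, ∀ y ∈ A, d x y ≤ C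

/-- `A` has property (OB) relative to `G`: finite diameter for every compatible
left-invariant metric. -/
def HasRelPropOB (G : Type*) [Group G] [TopologicalSpace G] (A : Set G) : Prop :=
  ∀ d : G → G → ℝ, IsCompatibleLeftInvariantMetric G d → FiniteDiam d A

/-- A sequence tends to infinity in `G` if some compatible left-invariant metric
witnesses `d (g n) 1 → ∞`. -/
def TendsToInfinity (G : Type*) [Group G] [TopologicalSpace G] (g : ℕ → G) : Prop :=
  ∃ d : G → G → ℝ, IsCompatibleLeftInvariantMetric G d ∧
    Filter.Tendsto (fun n => d (g n) 1) Filter.atTop Filter.atTop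

/-- A compatible left-invariant metric is metrically proper if `d (g n) 1 → ∞`
whenever `g n → ∞`. -/
def MetricallyProperMetric (G : Type*) [Group G] [TopologicalSpace G]
    (d : G → G → ℝ) : Prop :=
  ∀ g : ℕ → G, TendsToInfinity G g →
    Filter.Tendsto (fun n => d (g n) 1) Filter.atTop Filter.atTop

noncomputable section OBAux

/-- `pw k = 2⁻¹ ^ k`. -/
def pw (k : ℕ) : ℝ := 2⁻¹ ^ k

lemma pw_pos (k : ℕ) : 0 < pw k := by unfold pw; positivity

lemma pw_anti {j k : ℕ} (h : j ≤ k) : pw k ≤ pw j :=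
  pow_le_pow_of_le_one (by norm_num) (by norm_num) h

lemma pw_le_one (k : ℕ) : pw k ≤ 1 := pw_anti (Nat.zero_le k)

lemma pw_lt {j k : ℕ} (h : j < k) : pw k < pw j :=
  pow_lt_pow_right_of_lt_one₀ (by norm_num) (by norm_num) h

lemma le_of_pw_le {j k : ℕ} (h : pw k ≤ pw j) : j ≤ k := by
  by_contra hc
  exact absurd h (not_le.2 (pw_lt (by omega)))

lemma pw_add_pw (k : ℕ) : pw (k+2) + pw (k+2) = pw (k+1) := by
  simp only [pw, pow_succ]
  ring

variable {G : Type*} [Group G]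

lemma bk_aux (V : ℕ → Set G) (hone : ∀ k, (1:G) ∈ V k)
    (hcube : ∀ k, V (k+1) * V (k+1) * V (k+1) ⊆ V k) :
    ∀ (n : ℕ) (l : List (G × ℝ)), l.length = n →
      (∀ p ∈ l, 0 ≤ p.2 ∧ ∀ j, p.2 ≤ pw j → p.1 ∈ V j) →
      ∀ k, (l.map Prod.snd).sum ≤ pw (k+1) → (l.map Prod.fst).prod ∈ V k := by
  intro n
  induction n using Nat.strong_induction_on with
  | _ n IH =>
    intro l hlen hadm k hsum
    rcases eq_or_ne l [] with rfl | hne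
    · simpa using hone k
    have hn : 0 < n := by subst hlen; exact List.length_pos_iff.2 hne
    classical
    have hP0 : ((l.take 0).map Prod.snd).sum ≤ pw (k+2) := by
      simp [(pw_pos (k+2)).le]
    obtain ⟨j₀, hj₀, hj₀le, hmax⟩ :
        ∃ j₀, ((l.take j₀).map Prod.snd).sum ≤ pw (k+2) ∧ j₀ ≤ n-1 ∧
          ∀ m, j₀ < m → m ≤ n-1 → ¬ ((l.take m).map Prod.snd).sum ≤ pw (k+2) := by
      haveI : DecidablePred (fun j => ((l.take j).map Prod.snd).sum ≤ pw (k+2)) :=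
        Classical.decPred _
      refine ⟨Nat.findGreatest (fun j => ((l.take j).map Prod.snd).sum ≤ pw (k+2)) (n-1),
        ?_, Nat.findGreatest_le _, fun m h1 h2 => ?_⟩
      · exact Nat.findGreatest_spec (P := fun j => ((l.take j).map Prod.snd).sum ≤ pw (k+2))
          (Nat.zero_le _) hP0
      · exact Nat.findGreatest_is_greatest
          (P := fun j => ((l.take j).map Prod.snd).sum ≤ pw (k+2)) h1 h2
    have hj₀lt : j₀ < n := lt_of_le_of_lt hj₀le (Nat.sub_lt hn one_pos)
    have hj₀lt' : j₀ < l.length := hlen ▸ hj₀lt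
    have hnonneg : ∀ x ∈ l.map Prod.snd, (0:ℝ) ≤ x := by
      intro x hx
      obtain ⟨p, hp, rfl⟩ := List.mem_map.1 hx
      exact (hadm p hp).1
    -- prefix
    have hpre : ((l.take j₀).map Prod.fst).prod ∈ V (k+1) := by
      refine IH j₀ hj₀lt (l.take j₀) (by simp [hlen, Nat.le_of_lt hj₀lt]) ?_ (k+1) hj₀
      exact fun p hp => hadm p (List.take_subset _ _ hp)
    -- middle
    have hmidmem : (l[j₀].2) ∈ l.map Prod.snd :=
      List.mem_map.2 ⟨l[j₀], l.getElem_mem hj₀lt', rfl⟩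
    have hmidle : l[j₀].2 ≤ pw (k+1) :=
      le_trans (List.single_le_sum hnonneg _ hmidmem) hsum
    have hmid : l[j₀].1 ∈ V (k+1) :=
      (hadm _ (l.getElem_mem hj₀lt')).2 (k+1) hmidle
    -- splitting the sum
    have hsplit : ((l.take (j₀+1)).map Prod.snd).sum + ((l.drop (j₀+1)).map Prod.snd).sum
        = (l.map Prod.snd).sum := by
      rw [← List.sum_append, ← List.map_append, List.take_append_drop]
    have htake1 : ((l.take (j₀+1)).map Prod.snd).sum
        = ((l.take j₀).map Prod.snd).sum + l[j₀].2 := by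
      rw [List.map_take, List.map_take, List.sum_take_succ _ _ (by simpa using hj₀lt'),
        List.getElem_map]
    have hsufsum : ((l.drop (j₀+1)).map Prod.snd).sum ≤ pw (k+2) := by
      rcases le_or_gt (j₀+1) (n-1) with hcase | hcase
      · have hgt := hmax _ (by omega) hcase
        push_neg at hgt
        nlinarith [pw_add_pw k]
      · have hend : l.drop (j₀+1) = [] := List.drop_eq_nil_of_le (by omega)
        simp [hend, (pw_pos (k+2)).le]
    -- suffix
    have hsuf : ((l.drop (j₀+1)).map Prod.fst).prod ∈ V (k+1) := by
      refine IH (n - (j₀+1)) (by omega) (l.drop (j₀+1)) (by simp [hlen]) ?_ (k+1) hsufsum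
      exact fun p hp => hadm p (List.drop_subset _ _ hp)
    -- combine
    have hdecomp : (l.map Prod.fst).prod
        = ((l.take j₀).map Prod.fst).prod * l[j₀].1 * ((l.drop (j₀+1)).map Prod.fst).prod := by
      rw [List.map_take, List.map_drop]
      rw [← List.prod_take_mul_prod_drop (l.map Prod.fst) (j₀+1),
        List.prod_take_succ _ _ (by simpa using hj₀lt'), List.getElem_map]
    rw [hdecomp]
    exact hcube k (Set.mul_mem_mul (Set.mul_mem_mul hpre hmid) hsuf)

variable {G : Type*} [Group G]

/-- Admissible generator-cost pairs. -/
def Adm (V : ℕ → Set G) (gen : ℕ → G) (x : G) (c : ℝ) : Prop :=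
  0 ≤ c ∧ ((x ∈ V 0 ∧ ∀ k, c ≤ pw k → x ∈ V k) ∨
    (∃ m : ℕ, (x = gen m ∨ x⁻¹ = gen m) ∧ (m : ℝ) + 1 ≤ c))

/-- Costs of admissible decompositions of `x`. -/
def costs (V : ℕ → Set G) (gen : ℕ → G) (x : G) : Set ℝ :=
  {c | ∃ l : List (G × ℝ), (∀ p ∈ l, Adm V gen p.1 p.2) ∧
    (l.map Prod.fst).prod = x ∧ (l.map Prod.snd).sum = c}

/-- The word norm. -/
noncomputable def nn (V : ℕ → Set G) (gen : ℕ → G) (x : G) : ℝ := sInf (costs V gen x)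

section NN

variable (V : ℕ → Set G) (gen : ℕ → G)

lemma costs_nonneg {x : G} {c : ℝ} (hc : c ∈ costs V gen x) : 0 ≤ c := by
  obtain ⟨l, hadm, -, rfl⟩ := hc
  refine List.sum_nonneg ?_
  intro a ha
  obtain ⟨p, hp, rfl⟩ := List.mem_map.1 ha
  exact (hadm p hp).1

lemma costs_bddBelow (x : G) : BddBelow (costs V gen x) :=
  ⟨0, fun c hc => costs_nonneg V gen hc⟩

lemma nn_nonneg (x : G) : 0 ≤ nn V gen x :=
  Real.sInf_nonneg (fun _ hc => costs_nonneg V gen hc)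

lemma nn_le_of_mem {x : G} {c : ℝ} (hc : c ∈ costs V gen x) : nn V gen x ≤ c :=
  csInf_le (costs_bddBelow V gen x) hc

lemma nn_one : nn V gen 1 = 0 := by
  refine le_antisymm (nn_le_of_mem V gen ?_) (nn_nonneg V gen 1)
  exact ⟨[], by simp, by simp, by simp⟩

lemma costs_add {x y : G} {a b : ℝ} (ha : a ∈ costs V gen x) (hb : b ∈ costs V gen y) :
    a + b ∈ costs V gen (x * y) := by
  obtain ⟨lx, hlx, hpx, hsx⟩ := ha
  obtain ⟨ly, hly, hpy, hsy⟩ := hb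
  refine ⟨lx ++ ly, ?_, ?_, ?_⟩
  · intro p hp
    rcases List.mem_append.1 hp with h | h
    exacts [hlx p h, hly p h]
  · rw [List.map_append, List.prod_append, hpx, hpy]
  · rw [List.map_append, List.sum_append, hsx, hsy]

variable {V gen}

variable [TopologicalSpace G] [IsTopologicalGroup G]

lemma costs_nonempty (hV0open : IsOpen (V 0)) (hone0 : (1:G) ∈ V 0)
    (hsym0 : (V 0)⁻¹ = V 0) (hdense : DenseRange gen) (x : G) :
    (costs V gen x).Nonempty := by
  obtain ⟨m, hm⟩ : ∃ m, gen m ∈ x • V 0 :=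
    hdense.exists_mem_open (hV0open.smul x) ⟨x, by
      simpa using Set.smul_mem_smul_set (a := x) hone0⟩
  obtain ⟨v, hv, he⟩ := hm
  have hvinv : v⁻¹ ∈ V 0 := by
    rw [← hsym0]
    simpa using hv
  refine ⟨(m:ℝ) + 1 + 1, ⟨[(gen m, (m:ℝ)+1), (v⁻¹, 1)], ?_, ?_, by simp⟩⟩
  · intro p hp
    rcases List.mem_cons.1 hp with rfl | hp
    · exact ⟨by positivity, Or.inr ⟨m, Or.inl rfl, le_refl _⟩⟩
    · rcases List.mem_cons.1 hp with rfl | hp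
      · refine ⟨zero_le_one, Or.inl ⟨hvinv, fun k hk => ?_⟩⟩
        have : k ≤ 0 := le_of_pw_le (by simpa [pw] using hk)
        simpa [Nat.le_zero.1 this] using hvinv
      · simp at hp
  · have : gen m = x * v := by
      rw [← he]; simp [smul_eq_mul]
    simp [this, mul_assoc]

lemma nn_mul_le (hV0open : IsOpen (V 0)) (hone0 : (1:G) ∈ V 0)
    (hsym0 : (V 0)⁻¹ = V 0) (hdense : DenseRange gen) (x y : G) :
    nn V gen (x * y) ≤ nn V gen x + nn V gen y := by
  refine le_of_forall_pos_le_add ?_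
  intro ε hε
  obtain ⟨a, ha, halt⟩ := exists_lt_of_csInf_lt (costs_nonempty hV0open hone0 hsym0 hdense x)
    (lt_add_of_pos_right (nn V gen x) (half_pos hε))
  obtain ⟨b, hb, hblt⟩ := exists_lt_of_csInf_lt (costs_nonempty hV0open hone0 hsym0 hdense y)
    (lt_add_of_pos_right (nn V gen y) (half_pos hε))
  have := nn_le_of_mem V gen (costs_add V gen ha hb)
  linarith

lemma Adm_inv (hsym : ∀ k, (V k)⁻¹ = V k) {x : G} {c : ℝ} (h : Adm V gen x c) :
    Adm V gen x⁻¹ c := by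
  obtain ⟨hc, h | h⟩ := h
  · refine ⟨hc, Or.inl ⟨?_, fun k hk => ?_⟩⟩
    · rw [← hsym 0]; simpa using h.1
    · rw [← hsym k]; simpa using h.2 k hk
  · obtain ⟨m, hm, hmc⟩ := h
    exact ⟨hc, Or.inr ⟨m, by rcases hm with h | h <;> simp [h], hmc⟩⟩

lemma costs_inv (hsym : ∀ k, (V k)⁻¹ = V k) {x : G} {c : ℝ} (h : c ∈ costs V gen x) :
    c ∈ costs V gen x⁻¹ := by
  obtain ⟨l, hadm, hprod, hsum⟩ := h
  refine ⟨(l.map (fun p => (p.1⁻¹, p.2))).reverse, ?_, ?_, ?_⟩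
  · intro p hp
    rw [List.mem_reverse] at hp
    obtain ⟨q, hq, rfl⟩ := List.mem_map.1 hp
    exact Adm_inv hsym (hadm q hq)
  · rw [List.map_reverse, List.map_map, ← hprod, List.prod_inv_reverse]
    congr 1
    rw [List.map_map]
    rfl
  · rw [List.map_reverse, List.sum_reverse, List.map_map]
    exact hsum
lemma nn_inv (hsym : ∀ k, (V k)⁻¹ = V k) (x : G) : nn V gen x⁻¹ = nn V gen x := by
  unfold nn
  congr 1
  ext c
  constructor
  · intro h
    simpa using costs_inv hsym h
  · exact costs_inv hsym

lemma anti_of_cube (hone : ∀ k, (1:G) ∈ V k)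
    (hcube : ∀ k, V (k+1) * V (k+1) * V (k+1) ⊆ V k) :
    ∀ {j k : ℕ}, j ≤ k → V k ⊆ V j := by
  have hstep : ∀ k, V (k+1) ⊆ V k := by
    intro k x hx
    have := hcube k (Set.mul_mem_mul (Set.mul_mem_mul hx (hone (k+1))) (hone (k+1)))
    simpa using this
  intro j k h
  induction k with
  | zero =>
    have hj : j = 0 := Nat.le_zero.1 h
    subst hj; exact subset_rfl
  | succ k ih =>
    rcases Nat.lt_or_ge j (k+1) with hlt | hge
    · exact (hstep k).trans (ih (by omega))
    · have : j = k+1 := by omega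
      subst this; exact subset_rfl

end NN

section NN2

variable {G : Type*} [Group G] [TopologicalSpace G] [IsTopologicalGroup G]
variable {V : ℕ → Set G} {gen : ℕ → G}

lemma nn_mem_V (hone : ∀ k, (1:G) ∈ V k)
    (hcube : ∀ k, V (k+1) * V (k+1) * V (k+1) ⊆ V k)
    (hV0open : IsOpen (V 0)) (hsym0 : (V 0)⁻¹ = V 0) (hdense : DenseRange gen)
    {x : G} {k : ℕ} (h : nn V gen x < pw (k+1)) : x ∈ V k := by
  obtain ⟨c, hc, hlt⟩ :=
    exists_lt_of_csInf_lt (costs_nonempty hV0open (hone 0) hsym0 hdense x) h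
  obtain ⟨l, hadm, hprod, hsum⟩ := hc
  have hnonneg : ∀ a ∈ l.map Prod.snd, (0:ℝ) ≤ a := by
    intro a ha
    obtain ⟨p, hp, rfl⟩ := List.mem_map.1 ha
    exact (hadm p hp).1
  have hleft : ∀ p ∈ l, 0 ≤ p.2 ∧ ∀ j, p.2 ≤ pw j → p.1 ∈ V j := by
    intro p hp
    obtain ⟨h0, hL | hR⟩ := hadm p hp
    · exact ⟨h0, hL.2⟩
    · exfalso
      obtain ⟨m, -, hm⟩ := hR
      have h1 : p.2 ≤ c := by
        rw [← hsum]
        exact List.single_le_sum hnonneg _ (List.mem_map.2 ⟨p, hp, rfl⟩)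
      have h2 : pw (k+1) ≤ pw 1 := pw_anti (by omega)
      have h3 : pw 1 = 1/2 := by norm_num [pw]
      have h4 : (1:ℝ) ≤ (m:ℝ) + 1 := by
        have := Nat.cast_nonneg (α := ℝ) m
        linarith
      linarith
  rw [← hprod]
  exact bk_aux V hone hcube l.length l rfl hleft k (by rw [hsum]; exact hlt.le)

lemma nn_le_pw (hone : ∀ k, (1:G) ∈ V k)
    (hcube : ∀ k, V (k+1) * V (k+1) * V (k+1) ⊆ V k)
    {x : G} {k : ℕ} (h : x ∈ V k) : nn V gen x ≤ pw k := by
  refine nn_le_of_mem V gen ⟨[(x, pw k)], ?_, by simp, by simp⟩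
  intro p hp
  rcases List.mem_cons.1 hp with rfl | hp
  · exact ⟨(pw_pos k).le, Or.inl ⟨anti_of_cube hone hcube (Nat.zero_le k) h,
      fun j hj => anti_of_cube hone hcube (le_of_pw_le hj) h⟩⟩
  · simp at hp

lemma clim_mul_le {d : G → G → ℝ} (hd : IsCompatibleLeftInvariantMetric G d) (x y : G) :
    d (x * y) 1 ≤ d x 1 + d y 1 := by
  have h1 : d (x*y) 1 ≤ d (x*y) x + d x 1 := hd.1.2.2 _ _ _
  have h2 : d (x*y) x = d y 1 := by
    have := hd.2.2 x y 1
    simpa using this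
  linarith

lemma claimA (hone : ∀ k, (1:G) ∈ V k)
    (hcube : ∀ k, V (k+1) * V (k+1) * V (k+1) ⊆ V k)
    (d : G → G → ℝ) (hd : IsCompatibleLeftInvariantMetric G d)
    (B CU CF : ℝ) (hCU : 0 ≤ CU) (hCF : 0 ≤ CF)
    (hUB : ∀ x ∈ V 0, d x 1 ≤ CU)
    (hFB : ∀ (x : G) (c : ℝ), c ≤ B →
      (∃ m : ℕ, (x = gen m ∨ x⁻¹ = gen m) ∧ (m:ℝ)+1 ≤ c) → d x 1 ≤ CF) :
    ∀ (n : ℕ) (l : List (G × ℝ)), l.length = n → (∀ p ∈ l, Adm V gen p.1 p.2) →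
      (l.map Prod.snd).sum ≤ B →
      d ((l.map Prod.fst).prod) 1 ≤ (2*CU + CF) * (2 * (l.map Prod.snd).sum + 1) := by
  intro n
  induction n using Nat.strong_induction_on with
  | _ n IH =>
    intro l hlen hadm hsumB
    classical
    set K : ℝ := 2*CU + CF with hK
    have hK0 : 0 ≤ K := by positivity
    have hnonneg : ∀ a ∈ l.map Prod.snd, (0:ℝ) ≤ a := by
      intro a ha
      obtain ⟨p, hp, rfl⟩ := List.mem_map.1 ha
      exact (hadm p hp).1
    have hs0 : 0 ≤ (l.map Prod.snd).sum := List.sum_nonneg hnonneg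
    have hpw1 : pw 1 = 1/2 := by norm_num [pw]
    by_cases hbase : (∀ p ∈ l, 0 ≤ p.2 ∧ ∀ j, p.2 ≤ pw j → p.1 ∈ V j) ∧
        (l.map Prod.snd).sum ≤ pw 1
    · have hmem : (l.map Prod.fst).prod ∈ V 0 :=
        bk_aux V hone hcube l.length l rfl hbase.1 0 hbase.2
      have := hUB _ hmem
      nlinarith
    · -- find minimal bad prefix
      set Q : ℕ → Prop := fun j =>
        ¬((∀ p ∈ l.take j, 0 ≤ p.2 ∧ ∀ i, p.2 ≤ pw i → p.1 ∈ V i) ∧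
          ((l.take j).map Prod.snd).sum ≤ pw 1) with hQ
      have hQlen : Q l.length := by
        rw [hQ]
        simp only [List.take_length]
        exact hbase
      haveI : DecidablePred Q := Classical.decPred _
      have hex : ∃ j, Q j := ⟨l.length, hQlen⟩
      obtain ⟨j, hQj, hmin⟩ : ∃ j, Q j ∧ ∀ i, i < j → ¬ Q i :=
        ⟨Nat.find hex, Nat.find_spec hex, fun i hi => Nat.find_min hex hi⟩
      have hQ0 : ¬ Q 0 := by
        rw [hQ]
        simp only [List.take_zero, not_not, List.map_nil, List.sum_nil]
        exact ⟨fun p hp => absurd hp List.not_mem_nil, (pw_pos 1).le⟩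
      have hjpos : 0 < j := by
        rcases Nat.eq_zero_or_pos j with h0 | h0
        · exact absurd (h0 ▸ hQj) hQ0
        · exact h0
      obtain ⟨j', rfl⟩ : ∃ j', j = j' + 1 := ⟨j - 1, by omega⟩
      have hjlen : j' + 1 ≤ l.length := by
        by_contra hcon
        exact (hmin l.length (by omega)) hQlen
      have hj'lt : j' < l.length := by omega
      have hgood : (∀ p ∈ l.take j', 0 ≤ p.2 ∧ ∀ i, p.2 ≤ pw i → p.1 ∈ V i) ∧
          ((l.take j').map Prod.snd).sum ≤ pw 1 := by
        have := hmin j' (by omega)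
        rw [hQ] at this
        push_neg at this
        exact not_not.1 (by simpa [hQ] using hmin j' (by omega))
      -- the middle element
      set p := l[j'] with hp
      have hpmem : p ∈ l := l.getElem_mem hj'lt
      have hple : p.2 ≤ (l.map Prod.snd).sum :=
        List.single_le_sum hnonneg _ (List.mem_map.2 ⟨p, hpmem, rfl⟩)
      -- sums
      have htake1 : ((l.take (j'+1)).map Prod.snd).sum
          = ((l.take j').map Prod.snd).sum + p.2 := by
        rw [List.map_take, List.map_take, List.sum_take_succ _ _ (by simpa using hj'lt),
          List.getElem_map]
      have hsplit : ((l.take (j'+1)).map Prod.snd).sum + ((l.drop (j'+1)).map Prod.snd).sum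
          = (l.map Prod.snd).sum := by
        rw [← List.sum_append, ← List.map_append, List.take_append_drop]
      -- the middle element bound and the prefix-sum lower bound
      have hkey : d p.1 1 ≤ CU + CF ∧ pw 1 ≤ ((l.take (j'+1)).map Prod.snd).sum := by
        by_cases hLp : p.1 ∈ V 0 ∧ ∀ i, p.2 ≤ pw i → p.1 ∈ V i
        · constructor
          · have := hUB _ hLp.1
            linarith
          · -- Q (j'+1) holds, and take (j'+1) is all-good, so the sum clause fails
            have hallgood : ∀ q ∈ l.take (j'+1), 0 ≤ q.2 ∧ ∀ i, q.2 ≤ pw i → q.1 ∈ V i := by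
              intro q hq
              rw [List.take_succ] at hq
              rcases List.mem_append.1 hq with hq | hq
              · exact hgood.1 q hq
              · have hq' : q = p := by
                  simpa [List.getElem?_eq_getElem hj'lt] using hq
                rw [hq']
                exact ⟨(hadm p hpmem).1, hLp.2⟩
            have : ¬ ((l.take (j'+1)).map Prod.snd).sum ≤ pw 1 := by
              intro hcon
              exact hQj ⟨hallgood, hcon⟩
            linarith
        · -- generator piece
          have hadm' := hadm p hpmem
          have hR : ∃ m : ℕ, (p.1 = gen m ∨ p.1⁻¹ = gen m) ∧ (m:ℝ)+1 ≤ p.2 := by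
            rcases hadm'.2 with hL | hR
            · exact absurd hL hLp
            · exact hR
          constructor
          · have := hFB p.1 p.2 (le_trans hple hsumB) hR
            linarith
          · obtain ⟨m, -, hm⟩ := hR
            have h1 : (1:ℝ) ≤ p.2 := by
              have := Nat.cast_nonneg (α := ℝ) m
              linarith
            have h2 : 0 ≤ ((l.take j').map Prod.snd).sum :=
              List.sum_nonneg (fun a ha => by
                obtain ⟨q, hq, rfl⟩ := List.mem_map.1 ha
                exact (hadm q (List.take_subset _ _ hq)).1)
            rw [htake1]
            linarith [hpw1 ▸ (by norm_num : (1:ℝ)/2 ≤ 1)]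
      -- prefix bound
      have hprefix : d ((l.take j').map Prod.fst).prod 1 ≤ CU := by
        refine hUB _ (bk_aux V hone hcube j' (l.take j') (by simp [Nat.le_of_lt hj'lt]) hgood.1 0 ?_)
        exact hgood.2
      -- suffix bound via IH
      have hdroplen : (l.drop (j'+1)).length < n := by
        rw [List.length_drop]
        omega
      have hdropsumB : ((l.drop (j'+1)).map Prod.snd).sum ≤ B := by
        have h2 : 0 ≤ ((l.take (j'+1)).map Prod.snd).sum :=
          List.sum_nonneg (fun a ha => by
            obtain ⟨q, hq, rfl⟩ := List.mem_map.1 ha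
            exact (hadm q (List.take_subset _ _ hq)).1)
        linarith
      have hsuffix := IH _ hdroplen (l.drop (j'+1)) rfl
        (fun q hq => hadm q (List.drop_subset _ _ hq)) hdropsumB
      -- decomposition of the product
      have hdecomp : (l.map Prod.fst).prod
          = ((l.take j').map Prod.fst).prod * p.1 * ((l.drop (j'+1)).map Prod.fst).prod := by
        rw [List.map_take, List.map_drop]
        rw [← List.prod_take_mul_prod_drop (l.map Prod.fst) (j'+1),
          List.prod_take_succ _ _ (by simpa using hj'lt), List.getElem_map]
      have htri : d ((l.map Prod.fst).prod) 1
          ≤ d ((l.take j').map Prod.fst).prod 1 + d p.1 1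
            + d ((l.drop (j'+1)).map Prod.fst).prod 1 := by
        rw [hdecomp]
        have h1 := clim_mul_le hd (((l.take j').map Prod.fst).prod * p.1)
          ((l.drop (j'+1)).map Prod.fst).prod
        have h2 := clim_mul_le hd (((l.take j').map Prod.fst).prod) p.1
        linarith
      -- final arithmetic
      have hsd : ((l.drop (j'+1)).map Prod.snd).sum ≤ (l.map Prod.snd).sum - 1/2 := by
        have := hkey.2
        rw [hpw1] at this
        linarith
      have hsd0 : 0 ≤ ((l.drop (j'+1)).map Prod.snd).sum :=
        List.sum_nonneg (fun a ha => by
          obtain ⟨q, hq, rfl⟩ := List.mem_map.1 ha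
          exact (hadm q (List.drop_subset _ _ hq)).1)
      have hKbound : K * (2 * ((l.drop (j'+1)).map Prod.snd).sum + 1)
          ≤ K * (2 * (l.map Prod.snd).sum) := by
        apply mul_le_mul_of_nonneg_left _ hK0
        linarith
      calc d ((l.map Prod.fst).prod) 1
          ≤ CU + (CU + CF) + K * (2 * ((l.drop (j'+1)).map Prod.snd).sum + 1) := by
            linarith [hkey.1, hprefix, hsuffix]
        _ ≤ K + K * (2 * (l.map Prod.snd).sum) := by
            linarith [hKbound]
        _ = K * (2 * (l.map Prod.snd).sum + 1) := by ring

end NN2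

end OBAux

section Chain

variable {G : Type*} [Group G] [TopologicalSpace G] [IsTopologicalGroup G]

theorem step_lemma {U : Set G} (hU : U ∈ 𝓝 1) :
    ∃ T : Set G, IsOpen T ∧ (1:G) ∈ T ∧ T⁻¹ = T ∧ T * T * T ⊆ U ∧ T ⊆ U := by
  obtain ⟨V, Vo, V1, hV⟩ := exists_open_nhds_one_mul_subset hU
  obtain ⟨W, Wo, W1, hW⟩ := exists_open_nhds_one_mul_subset (Vo.mem_nhds V1)
  have hWV : W ⊆ V := fun x hx => by simpa using hW (Set.mul_mem_mul hx W1)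
  refine ⟨W ∩ W⁻¹, Wo.inter Wo.inv, ⟨W1, by simpa using W1⟩, by simp [Set.inter_comm], ?_, ?_⟩
  · intro x hx
    obtain ⟨a, ha, b, hb, rfl⟩ := hx
    obtain ⟨c, hc, d, hd, rfl⟩ := ha
    have hcd : c * d ∈ V := hW (Set.mul_mem_mul hc.1 hd.1)
    have hb' : b ∈ V := hWV hb.1
    exact hV (Set.mul_mem_mul hcd hb')
  · intro x hx
    have h1 : x ∈ V := hWV hx.1
    have h2 : x * 1 ∈ U := hV (Set.mul_mem_mul h1 V1)
    simpa using h2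

theorem step_lemma' {U : Set G} (hU : U ∈ 𝓝 1) :
    ∃ T : Set G, (IsOpen T ∧ (1:G) ∈ T ∧ T⁻¹ = T) ∧ T * T * T ⊆ U ∧ T ⊆ U := by
  obtain ⟨T, h1, h2, h3, h4, h5⟩ := step_lemma hU
  exact ⟨T, ⟨h1, h2, h3⟩, h4, h5⟩

lemma exists_V_chain [TopologicalSpace.MetrizableSpace G] (U : Set G) (hU : U ∈ 𝓝 1) :
    ∃ V : ℕ → Set G, (∀ k, IsOpen (V k)) ∧ (∀ k, (1:G) ∈ V k) ∧ (∀ k, (V k)⁻¹ = V k) ∧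
      (∀ k, V (k+1) * V (k+1) * V (k+1) ⊆ V k) ∧ V 0 ⊆ U ∧
      ∀ s ∈ 𝓝 (1:G), ∃ k, V k ⊆ s := by
  letI : MetricSpace G := TopologicalSpace.metrizableSpaceMetric G
  obtain ⟨B, hB⟩ := (𝓝 (1:G)).exists_antitone_basis
  have hBmem : ∀ k, B k ∈ 𝓝 (1:G) := fun k => hB.toHasBasis.mem_of_mem trivial
  choose F hF1 hF2 hF3 using fun (s : Set G) (hs : s ∈ 𝓝 (1:G)) => step_lemma' hs
  let W : ℕ → {s : Set G // s ∈ 𝓝 (1:G)} := fun n => Nat.rec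
    ⟨F U hU, (hF1 U hU).1.mem_nhds (hF1 U hU).2.1⟩
    (fun k prev => ⟨F (prev.1 ∩ B k) (Filter.inter_mem prev.2 (hBmem k)),
      (hF1 _ _).1.mem_nhds (hF1 _ _).2.1⟩) n
  have hW0 : (W 0).1 = F U hU := rfl
  have hWs : ∀ k, (W (k+1)).1
      = F ((W k).1 ∩ B k) (Filter.inter_mem (W k).2 (hBmem k)) := fun k => rfl
  have hopen : ∀ k, IsOpen (W k).1 := by
    intro k
    cases k with
    | zero => rw [hW0]; exact (hF1 U hU).1
    | succ k => rw [hWs k]; exact (hF1 _ _).1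
  have hone' : ∀ k, (1:G) ∈ (W k).1 := by
    intro k
    cases k with
    | zero => rw [hW0]; exact (hF1 U hU).2.1
    | succ k => rw [hWs k]; exact (hF1 _ _).2.1
  have hsym' : ∀ k, ((W k).1)⁻¹ = (W k).1 := by
    intro k
    cases k with
    | zero => rw [hW0]; exact (hF1 U hU).2.2
    | succ k => rw [hWs k]; exact (hF1 _ _).2.2
  have hcube' : ∀ k, (W (k+1)).1 * (W (k+1)).1 * (W (k+1)).1 ⊆ (W k).1 := by
    intro k
    rw [hWs k]
    intro x hx
    exact ((hF2 _ _) hx).1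
  have hsub0 : (W 0).1 ⊆ U := by
    rw [hW0]
    exact hF3 U hU
  have hbasis : ∀ s ∈ 𝓝 (1:G), ∃ k, (W k).1 ⊆ s := by
    intro s hs
    obtain ⟨i, -, hi⟩ := hB.toHasBasis.mem_iff.1 hs
    refine ⟨i+1, ?_⟩
    rw [hWs i]
    intro x hx
    exact hi ((hF3 _ _ hx).2)
  exact ⟨fun k => (W k).1, hopen, hone', hsym', hcube', hsub0, hbasis⟩

end Chain

theorem exists_metrically_proper_metric_iff_local_OB {G : Type*} [Group G]
    [TopologicalSpace G] [IsTopologicalGroup G] [TopologicalSpace.MetrizableSpace G]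
    [TopologicalSpace.SeparableSpace G] :
    (∃ d : G → G → ℝ, IsCompatibleLeftInvariantMetric G d ∧ MetricallyProperMetric G d) ↔
      ∃ U ∈ nhds (1 : G), HasRelPropOB G U := by
  constructor
  · -- easy direction
    rintro ⟨d, hd, hproper⟩
    refine ⟨{y : G | d 1 y < 1}, ?_, ?_⟩
    · exact (hd.2.1 1 {y : G | d 1 y < 1}).2 ⟨1, one_pos, fun y hy => hy⟩
    · intro d' hd'
      by_contra hndiam
      unfold FiniteDiam at hndiam
      push_neg at hndiam
      have hsel : ∀ n : ℕ, ∃ z : G, z ∈ {y : G | d 1 y < 1} ∧ (n:ℝ) ≤ d' z 1 := by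
        intro n
        obtain ⟨x, hx, y, hy, hgt⟩ := hndiam (2*n)
        rcases le_or_gt (n:ℝ) (d' x 1) with h | h
        · exact ⟨x, hx, h⟩
        · refine ⟨y, hy, ?_⟩
          have htri : d' x y ≤ d' x 1 + d' 1 y := hd'.1.2.2 x 1 y
          have hsymm : d' 1 y = d' y 1 := hd'.1.2.1 1 y
          push_cast at hgt ⊢
          linarith
      choose z hz1 hz2 using hsel
      have htend : Filter.Tendsto (fun n => d' (z n) 1) atTop atTop :=
        tendsto_atTop_mono hz2 tendsto_natCast_atTop_atTop
      have hten := hproper z ⟨d', hd', htend⟩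
      obtain ⟨n, hn⟩ := (hten.eventually (eventually_ge_atTop (1:ℝ))).exists
      have hlt : d (z n) 1 < 1 := by
        have h1 := hz1 n
        have hsymm : d 1 (z n) = d (z n) 1 := hd.1.2.1 1 (z n)
        simpa [hsymm] using h1
      linarith
  · -- hard direction
    rintro ⟨U, hU, hOB⟩
    obtain ⟨V, hVopen, hVone, hVsym, hVcube, hVU, hVbasis⟩ := exists_V_chain U hU
    have hne : Nonempty G := ⟨1⟩
    set gen : ℕ → G := TopologicalSpace.denseSeq G with hgen
    have hdense : DenseRange gen := TopologicalSpace.denseRange_denseSeq G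
    have hmul := nn_mul_le (hVopen 0) (hVone 0) (hVsym 0) hdense (V := V) (gen := gen)
    have hinv := nn_inv (gen := gen) hVsym
    have hmemV : ∀ {x : G} {k : ℕ}, nn V gen x < pw (k+1) → x ∈ V k :=
      fun {x k} h => nn_mem_V hVone hVcube (hVopen 0) (hVsym 0) hdense h
    have hlepw : ∀ {x : G} {k : ℕ}, x ∈ V k → nn V gen x ≤ pw k :=
      fun {x k} h => nn_le_pw (gen := gen) hVone hVcube h
    refine ⟨fun x y => nn V gen (x⁻¹ * y), ⟨⟨?_, ?_, ?_⟩, ?_, ?_⟩, ?_⟩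
    · -- d x y = 0 ↔ x = y
      dsimp only
      intro x y
      constructor
      · intro h0
        have hall : ∀ k, x⁻¹ * y ∈ V k := by
          intro k
          exact hmemV (h0 ▸ pw_pos (k+1))
        by_contra hne'
        have hz : x⁻¹ * y ≠ 1 := by
          intro hc
          exact hne' (by
            have := hc
            rwa [inv_mul_eq_one] at this)
        letI : MetricSpace G := TopologicalSpace.metrizableSpaceMetric G
        have hop : {(x⁻¹ * y)}ᶜ ∈ 𝓝 (1:G) :=
          (isOpen_compl_singleton).mem_nhds (by simpa using hz.symm)
        obtain ⟨k, hk⟩ := hVbasis _ hop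
        exact (hk (hall k)) rfl
      · rintro rfl
        simpa using nn_one V gen
    · -- symmetry
      dsimp only
      intro x y
      rw [← hinv (x⁻¹ * y)]
      congr 1
      simp [mul_inv_rev]
    · -- triangle
      dsimp only
      intro x y z
      have h1 : x⁻¹ * z = (x⁻¹ * y) * (y⁻¹ * z) := by
        simp [mul_assoc]
      rw [h1]
      exact hmul _ _
    · -- compatibility
      intro x s
      constructor
      · intro hs
        have hpre : (fun y => x * y) ⁻¹' s ∈ 𝓝 (1:G) := by
          apply (continuous_mul_left x).continuousAt.preimage_mem_nhds
          simpa using hs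
        obtain ⟨k, hk⟩ := hVbasis _ hpre
        refine ⟨pw (k+1), pw_pos (k+1), ?_⟩
        intro y hy
        have : x⁻¹ * y ∈ V k := hmemV hy
        have := hk this
        simpa [mul_assoc] using this
      · rintro ⟨ε, hε, hball⟩
        obtain ⟨k, hk⟩ : ∃ k : ℕ, pw k < ε := by
          obtain ⟨k, hk⟩ := exists_pow_lt_of_lt_one hε (by norm_num : (2:ℝ)⁻¹ < 1)
          exact ⟨k, hk⟩
        refine Filter.mem_of_superset (((hVopen k).smul x).mem_nhds ?_) ?_
        · exact ⟨1, hVone k, by simp⟩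
        · intro y hy
          obtain ⟨v, hv, rfl⟩ := hy
          apply hball
          have : x⁻¹ * (x • v) = v := by simp [smul_eq_mul]
          simp only [Set.mem_setOf_eq, this]
          exact lt_of_le_of_lt (hlepw hv) hk
    · -- left invariance
      dsimp only
      intro h g f
      congr 1
      simp [mul_assoc]
    · -- metrically proper
      intro σ hσ
      obtain ⟨d', hd', htend⟩ := hσ
      rw [Filter.tendsto_atTop]
      intro b
      set B : ℝ := max b 0 + 1 with hB
      have hB1 : 1 ≤ B := by
        have := le_max_right b 0
        simp only [hB]
        linarith
      -- bound on V 0 ⊆ U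
      obtain ⟨C, hC⟩ := hOB d' hd'
      have h1U : (1:G) ∈ U := mem_of_mem_nhds hU
      set CU : ℝ := max C 0 with hCU
      have hUB : ∀ x ∈ V 0, d' x 1 ≤ CU := by
        intro x hx
        exact le_trans (hC x (hVU hx) 1 h1U) (le_max_left _ _)
      -- bound on the generators with small index
      have hd'inv : ∀ x : G, d' x⁻¹ 1 = d' x 1 := by
        intro x
        have h1 : d' (x * x⁻¹) (x * 1) = d' x⁻¹ 1 := hd'.2.2 x x⁻¹ 1
        have h2 : d' 1 x = d' x 1 := hd'.1.2.1 1 x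
        simpa [h2] using h1.symm
      have hMfin : (Set.Iic (Nat.floor B)).Finite := Set.finite_Iic _
      obtain ⟨CF', hCF'⟩ := (hMfin.image (fun m => d' (gen m) 1)).bddAbove
      set CF : ℝ := max CF' 0 with hCF
      have hFB : ∀ (x : G) (c : ℝ), c ≤ B →
          (∃ m : ℕ, (x = gen m ∨ x⁻¹ = gen m) ∧ (m:ℝ)+1 ≤ c) → d' x 1 ≤ CF := by
        intro x c hcB hex
        obtain ⟨m, hm, hmc⟩ := hex
        have hmB : m ∈ Set.Iic (Nat.floor B) := by
          simp only [Set.mem_Iic]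
          apply Nat.le_floor
          push_cast
          linarith
        have hmem : d' (gen m) 1 ∈ (fun m => d' (gen m) 1) '' (Set.Iic (Nat.floor B)) :=
          ⟨m, hmB, rfl⟩
        have hle : d' (gen m) 1 ≤ CF' := hCF' hmem
        rcases hm with rfl | hx
        · exact le_trans hle (le_max_left _ _)
        · calc d' x 1 = d' x⁻¹ 1 := (hd'inv x⁻¹ ▸ by rw [inv_inv])
            _ = d' (gen m) 1 := by rw [hx]
            _ ≤ CF := le_trans hle (le_max_left _ _)
      -- the key bound
      set Cbig : ℝ := (2*CU + CF) * (2*B + 1) with hCbig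
      have hkey : ∀ x : G, nn V gen x < B → d' x 1 ≤ Cbig := by
        intro x hx
        obtain ⟨c, hc, hclt⟩ :=
          exists_lt_of_csInf_lt (costs_nonempty (hVopen 0) (hVone 0) (hVsym 0) hdense x) hx
        obtain ⟨l, hadm, hprod, hsum⟩ := hc
        have := claimA hVone hVcube d' hd' B CU CF (le_max_right _ _) (le_max_right _ _)
          hUB hFB l.length l rfl hadm (by rw [hsum]; exact hclt.le)
        rw [hprod] at this
        refine le_trans this ?_
        rw [hCbig]
        have hK0 : (0:ℝ) ≤ 2*CU + CF := by positivity
        apply mul_le_mul_of_nonneg_left _ hK0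
        rw [hsum]
        linarith
      -- conclude
      have hev : ∀ᶠ n in atTop, Cbig + 1 ≤ d' (σ n) 1 :=
        htend.eventually (eventually_ge_atTop (Cbig + 1))
      refine hev.mono ?_
      intro n hn
      have hge : B ≤ nn V gen (σ n) := by
        by_contra hcon
        push_neg at hcon
        have := hkey (σ n) hcon
        linarith
      have heq : nn V gen ((σ n)⁻¹ * 1) = nn V gen (σ n) := by
        rw [mul_one, hinv]
      show b ≤ nn V gen ((σ n)⁻¹ * 1)
      rw [heq]
      have : b ≤ B := by
        have := le_max_left b 0
        simp only [hB]
        linarith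
      linarith
end

section
/- A separable metrisable topological group G admits a metrically proper two-sided invariant compatible metric if and only if the following three conditions hold: G is a SIN group (it has a neighbourhood basis at the identity consisting of conjugation-invariant sets); G has the local property (OB); and whenever a subset A ⊆ G has property (OB) relative to G, so does its conjugation closure A^G = {gag⁻¹ : a ∈ A, g ∈ G}. -/
set_option linter.unusedSectionVars false
set_option linter.unusedVariables false
set_option linter.unusedTactic false
set_option maxHeartbeats 1000000


open Filter Topology
open scoped Pointwise

/-- The closure of a set under conjugation: `A^G = {g a g⁻¹ : a ∈ A, g ∈ G}`. -/
def ConjClosure {G : Type*} [Group G] (A : Set G) : Set G :=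
  {x : G | ∃ a ∈ A, ∃ g : G, x = g * a * g⁻¹}

namespace OBP
variable {G : Type*} [Group G]

def chainCosts (w : G → ℝ) (g : G) : Set ℝ :=
  {c | ∃ l : List G, l.prod = g ∧ c = (l.map w).sum}

noncomputable def wlen (w : G → ℝ) (g : G) : ℝ := sInf (chainCosts w g)

variable {w : G → ℝ}

lemma chainCosts_nonempty (g : G) : (chainCosts w g).Nonempty :=
  ⟨w g, [g], by simp, by simp⟩

omit [Group G] in
lemma sum_map_nonneg (h0 : ∀ g, 0 ≤ w g) (l : List G) : 0 ≤ (l.map w).sum := by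
  apply List.sum_nonneg
  intro x hx
  obtain ⟨y, _, rfl⟩ := List.mem_map.1 hx
  exact h0 y

lemma chainCosts_bddBelow (h0 : ∀ g, 0 ≤ w g) (g : G) : BddBelow (chainCosts w g) := by
  refine ⟨0, ?_⟩
  rintro c ⟨l, -, rfl⟩
  exact sum_map_nonneg h0 l

lemma wlen_le (h0 : ∀ g, 0 ≤ w g) {g : G} {l : List G} (hl : l.prod = g) :
    wlen w g ≤ (l.map w).sum :=
  csInf_le (chainCosts_bddBelow h0 g) ⟨l, hl, rfl⟩

lemma le_wlen {g : G} {b : ℝ} (hb : ∀ l : List G, l.prod = g → b ≤ (l.map w).sum) :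
    b ≤ wlen w g := by
  apply le_csInf (chainCosts_nonempty g)
  rintro c ⟨l, hl, rfl⟩
  exact hb l hl

lemma wlen_nonneg (h0 : ∀ g, 0 ≤ w g) (g : G) : 0 ≤ wlen w g :=
  le_wlen fun l _ => sum_map_nonneg h0 l

lemma wlen_le_w (h0 : ∀ g, 0 ≤ w g) (g : G) : wlen w g ≤ w g := by
  simpa using wlen_le h0 (l := [g]) (by simp)

lemma wlen_one (h0 : ∀ g, 0 ≤ w g) : wlen w (1 : G) = 0 :=
  le_antisymm (by simpa using wlen_le h0 (l := ([] : List G)) (by simp))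
    (wlen_nonneg h0 1)

lemma wlen_mul (h0 : ∀ g, 0 ≤ w g) (g h : G) :
    wlen w (g * h) ≤ wlen w g + wlen w h := by
  rw [← sub_le_iff_le_add]
  apply le_wlen
  intro l₂ hl₂
  rw [sub_le_iff_le_add, add_comm, ← sub_le_iff_le_add]
  apply le_wlen
  intro l₁ hl₁
  rw [sub_le_iff_le_add]
  have := wlen_le h0 (l := l₂ ++ l₁) (g := g * h) (by simp [hl₂, hl₁])
  simpa [add_comm] using this

lemma wlen_inv_le (h0 : ∀ g, 0 ≤ w g) (hsym : ∀ g : G, w g⁻¹ = w g) (g : G) :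
    wlen w g⁻¹ ≤ wlen w g := by
  apply le_csInf (chainCosts_nonempty g)
  rintro c ⟨l, hl, rfl⟩
  have hprod : ((l.map (·⁻¹)).reverse).prod = g⁻¹ := by
    rw [← hl, ← List.prod_inv_reverse]
  have hsum : (((l.map (·⁻¹)).reverse).map w).sum = (l.map w).sum := by
    rw [List.map_reverse, List.sum_reverse, List.map_map]
    congr 1
    apply List.map_congr_left
    intro a _
    exact hsym a
  calc wlen w g⁻¹ ≤ (((l.map (·⁻¹)).reverse).map w).sum := wlen_le h0 hprod
    _ = (l.map w).sum := hsum

lemma wlen_inv (h0 : ∀ g, 0 ≤ w g) (hsym : ∀ g : G, w g⁻¹ = w g) (g : G) :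
    wlen w g⁻¹ = wlen w g :=
  le_antisymm (wlen_inv_le h0 hsym g)
    (by simpa using wlen_inv_le h0 hsym g⁻¹)

lemma wlen_conj (h0 : ∀ g, 0 ≤ w g) (hconj : ∀ h g : G, w (h * g * h⁻¹) = w g)
    (h g : G) : wlen w (h * g * h⁻¹) = wlen w g := by
  have key : ∀ h g : G, wlen w (h * g * h⁻¹) ≤ wlen w g := by
    intro h g
    apply le_csInf (chainCosts_nonempty g)
    rintro c ⟨l, hl, rfl⟩
    have hgen : ∀ l' : List G, (l'.map (fun s => h * s * h⁻¹)).prod = h * l'.prod * h⁻¹ := by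
      intro l'
      induction l' with
      | nil => simp
      | cons a t ih =>
        simp only [List.map_cons, List.prod_cons, ih]
        group
    have hprod : (l.map (fun s => h * s * h⁻¹)).prod = h * g * h⁻¹ := by
      rw [hgen, hl]
    have hsum : ((l.map (fun s => h * s * h⁻¹)).map w).sum = (l.map w).sum := by
      rw [List.map_map]
      congr 1
      apply List.map_congr_left
      intro a _
      exact hconj h a
    calc wlen w (h * g * h⁻¹) ≤ _ := wlen_le h0 hprod
      _ = (l.map w).sum := hsum
  refine le_antisymm (key h g) ?_
  have := key h⁻¹ (h * g * h⁻¹)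
  simpa [mul_assoc] using this

section Build
variable [TopologicalSpace G] [IsTopologicalGroup G]

lemma build_metric (w : G → ℝ)
    (h0 : ∀ g, 0 ≤ w g) (hsym : ∀ g : G, w g⁻¹ = w g)
    (hsep : ∀ g : G, g ≠ 1 → 0 < wlen w g)
    (hcompat : ∀ s ∈ nhds (1 : G), ∃ ε > (0 : ℝ), {g : G | wlen w g < ε} ⊆ s)
    (hnhds : ∀ ε > (0 : ℝ), {g : G | wlen w g < ε} ∈ nhds (1 : G)) :
    IsCompatibleLeftInvariantMetric G (fun x y => wlen w (x⁻¹ * y)) := by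
  refine ⟨⟨?_, ?_, ?_⟩, ?_, ?_⟩
  · intro x y
    constructor
    · intro h
      by_contra hxy
      have : x⁻¹ * y ≠ 1 := fun hh => hxy (by
        have := congrArg (x * ·) hh
        simpa [mul_assoc] using this.symm)
      exact absurd h (ne_of_gt (hsep _ this))
    · rintro rfl
      simpa using wlen_one h0
  · intro x y
    dsimp only
    have : (x⁻¹ * y)⁻¹ = y⁻¹ * x := by group
    rw [← wlen_inv h0 hsym (x⁻¹ * y), this]
  · intro x y z
    dsimp only
    have : x⁻¹ * z = (x⁻¹ * y) * (y⁻¹ * z) := by group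
    rw [this]
    exact wlen_mul h0 _ _
  · intro x s
    rw [← map_mul_left_nhds_one x, mem_map]
    constructor
    · intro hs
      obtain ⟨ε, hε, hsub⟩ := hcompat _ hs
      refine ⟨ε, hε, ?_⟩
      intro y hy
      have : x⁻¹ * y ∈ {g : G | wlen w g < ε} := hy
      have := hsub this
      simpa [mul_assoc] using this
    · rintro ⟨ε, hε, hsub⟩
      apply mem_of_superset (hnhds ε hε)
      intro g hg
      apply hsub
      simpa [mul_assoc] using hg
  · intro h g f
    simp [mul_assoc]

lemma build_rightinv (w : G → ℝ) (h0 : ∀ g, 0 ≤ w g)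
    (hconj : ∀ h g : G, w (h * g * h⁻¹) = w g) (h g f : G) :
    wlen w ((g * h)⁻¹ * (f * h)) = wlen w (g⁻¹ * f) := by
  have h1 : (g * h)⁻¹ * (f * h) = h⁻¹ * (g⁻¹ * f) * (h⁻¹)⁻¹ := by group
  have hconj' : ∀ a b : G, wlen w (a * b * a⁻¹) = wlen w b :=
    wlen_conj h0 hconj
  rw [h1, hconj']

end Build

lemma list_split (w : G → ℝ) (h0 : ∀ g, 0 ≤ w g) :
    ∀ (l : List G), l ≠ [] → ∀ c : ℝ, 0 ≤ c → c ≤ (l.map w).sum →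
    ∃ (l₁ : List G) (x : G) (l₂ : List G), l = l₁ ++ x :: l₂ ∧
      ((l₁.map w).sum ≤ c) ∧ ((l₂.map w).sum ≤ (l.map w).sum - c) := by
  intro l
  induction l with
  | nil => intro h; exact absurd rfl h
  | cons x t ih =>
    intro _ c hc hcle
    by_cases hcx : c ≤ w x
    · refine ⟨[], x, t, by simp, by simpa using hc, ?_⟩
      simp only [List.map_cons, List.sum_cons]
      linarith
    · push_neg at hcx
      have ht : t ≠ [] := by
        rintro rfl
        simp only [List.map_cons, List.map_nil, List.sum_cons, List.sum_nil, add_zero] at hcle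
        linarith
      obtain ⟨l₁, y, l₂, heq, hs1, hs2⟩ := ih ht (c - w x) (by linarith)
        (by simp only [List.map_cons, List.sum_cons] at hcle; linarith)
      refine ⟨x :: l₁, y, l₂, by simp [heq], ?_, ?_⟩
      · simp only [List.map_cons, List.sum_cons]; linarith
      · simp only [List.map_cons, List.sum_cons]; linarith


section Top
variable [TopologicalSpace G] [IsTopologicalGroup G]

/-- A symmetric conjugation-invariant cube-root neighbourhood inside any nbhd of 1. -/
lemma sin_shrink
    (hsin : ∀ U ∈ nhds (1 : G), ∃ V ∈ nhds (1 : G), V ⊆ U ∧ ∀ g : G, ∀ a ∈ V, g * a * g⁻¹ ∈ V)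
    {s : Set G} (hs : s ∈ nhds (1 : G)) :
    ∃ M : Set G, (M ∈ nhds (1 : G) ∧ M⁻¹ = M ∧ ∀ g : G, ∀ a ∈ M, g * a * g⁻¹ ∈ M) ∧
      M * M * M ⊆ s := by
  obtain ⟨V₁, hV₁mem, hV₁⟩ := exists_closed_nhds_one_inv_eq_mul_subset hs
  obtain ⟨V₂, hV₂mem, hV₂⟩ := exists_closed_nhds_one_inv_eq_mul_subset hV₁mem
  have hV₂sub : V₂ ⊆ V₁ := by
    intro v hv
    have : v * 1 ∈ V₁ := hV₂.2.2 (Set.mul_mem_mul hv (mem_of_mem_nhds hV₂mem))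
    simpa using this
  have hcube : V₂ * V₂ * V₂ ⊆ s := by
    intro x hx
    obtain ⟨y, hy, z, hz, rfl⟩ := hx
    exact hV₁.2.2 (Set.mul_mem_mul (hV₂.2.2 hy) (hV₂sub hz))
  obtain ⟨M₀, hM₀mem, hM₀sub, hM₀conj⟩ := hsin V₂ hV₂mem
  refine ⟨M₀ ∩ M₀⁻¹, ⟨Filter.inter_mem hM₀mem (inv_mem_nhds_one G hM₀mem), ?_, ?_⟩, ?_⟩
  · ext x; simp only [Set.mem_inv, Set.mem_inter_iff, inv_inv]; tauto
  · rintro g a ⟨ha1, ha2⟩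
    refine ⟨hM₀conj g a ha1, ?_⟩
    have : g * a⁻¹ * g⁻¹ ∈ M₀ := hM₀conj g a⁻¹ ha2
    simpa [Set.mem_inv, mul_assoc] using this
  · intro x hx
    apply hcube
    obtain ⟨y, hy, z, hz, rfl⟩ := hx
    obtain ⟨u, hu, v, hv, rfl⟩ := hy
    exact Set.mul_mem_mul (Set.mul_mem_mul (hM₀sub hu.1) (hM₀sub hv.1)) (hM₀sub hz.1)

lemma exists_chain [FirstCountableTopology G]
    (hsin : ∀ U ∈ nhds (1 : G), ∃ V ∈ nhds (1 : G), V ⊆ U ∧ ∀ g : G, ∀ a ∈ V, g * a * g⁻¹ ∈ V) :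
    ∃ U : ℕ → Set G, U 0 = Set.univ ∧ (∀ n, U n ∈ nhds (1 : G)) ∧
      (∀ n, (U n)⁻¹ = U n) ∧ (∀ n g a, a ∈ U n → g * a * g⁻¹ ∈ U n) ∧
      (∀ n, U (n + 1) * U (n + 1) * U (n + 1) ⊆ U n) ∧
      (∀ s ∈ nhds (1 : G), ∃ n, U n ⊆ s) ∧ (∀ n m, n ≤ m → U m ⊆ U n) := by
  obtain ⟨b, hb⟩ := (nhds (1 : G)).exists_antitone_basis
  have hbmem : ∀ n, b n ∈ nhds (1 : G) := fun n => hb.mem n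
  set T := {s : Set G // s ∈ nhds (1 : G) ∧ s⁻¹ = s ∧ ∀ g : G, ∀ a ∈ s, g * a * g⁻¹ ∈ s} with hT
  have step : ∀ (n : ℕ) (t : T), ∃ t' : T, t'.1 * t'.1 * t'.1 ⊆ t.1 ∩ b n := by
    intro n t
    obtain ⟨M, hM, hMsub⟩ := sin_shrink hsin (Filter.inter_mem t.2.1 (hbmem n))
    exact ⟨⟨M, hM⟩, hMsub⟩
  choose stp hstp using step
  let F : ℕ → T := fun n => Nat.rec ⟨Set.univ, Filter.univ_mem, by simp, by simp⟩
    (fun n t => stp n t) n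
  have hcube : ∀ n, (F (n+1)).1 * (F (n+1)).1 * (F (n+1)).1 ⊆ (F n).1 ∩ b n :=
    fun n => hstp n (F n)
  have hdec : ∀ n, (F (n+1)).1 ⊆ (F n).1 := by
    intro n x hx
    have h1 : (1 : G) ∈ (F (n+1)).1 := mem_of_mem_nhds (F (n+1)).2.1
    have hmem : x * 1 * 1 ∈ (F (n+1)).1 * (F (n+1)).1 * (F (n+1)).1 :=
      Set.mul_mem_mul (Set.mul_mem_mul hx h1) h1
    exact (hcube n (by simpa using hmem)).1
  refine ⟨fun n => (F n).1, rfl, fun n => (F n).2.1, fun n => (F n).2.2.1,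
    fun n => (F n).2.2.2, ?_, ?_, ?_⟩
  · intro n x hx
    exact (hcube n hx).1
  · intro s hs
    obtain ⟨n, -, hn⟩ := hb.toHasBasis.mem_iff.1 hs
    refine ⟨n + 1, ?_⟩
    intro x hx
    have h1 : (1 : G) ∈ (F (n+1)).1 := mem_of_mem_nhds (F (n+1)).2.1
    have hmem : x * 1 * 1 ∈ (F (n+1)).1 * (F (n+1)).1 * (F (n+1)).1 :=
      Set.mul_mem_mul (Set.mul_mem_mul hx h1) h1
    exact hn (hcube n (by simpa using hmem)).2
  · intro n m hnm
    induction hnm with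
    | refl => exact fun _ h => h
    | step _ ih => exact fun x hx => ih (hdec _ hx)


section BKF
variable [TopologicalSpace G] [IsTopologicalGroup G]
variable (U : ℕ → Set G)

noncomputable def bkf (g : G) : ℝ := sInf {x : ℝ | ∃ n : ℕ, g ∈ U n ∧ x = (2:ℝ)⁻¹ ^ n}

lemma bkf_set_nonempty (hU0 : U 0 = Set.univ) (g : G) :
    {x : ℝ | ∃ n : ℕ, g ∈ U n ∧ x = (2:ℝ)⁻¹ ^ n}.Nonempty :=
  ⟨1, 0, by simp [hU0], by simp⟩

lemma bkf_bdd (g : G) : BddBelow {x : ℝ | ∃ n : ℕ, g ∈ U n ∧ x = (2:ℝ)⁻¹ ^ n} := by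
  refine ⟨0, ?_⟩
  rintro x ⟨n, -, rfl⟩
  positivity

lemma bkf_le {g : G} {n : ℕ} (h : g ∈ U n) : bkf U g ≤ (2:ℝ)⁻¹ ^ n :=
  csInf_le (bkf_bdd U g) ⟨n, h, rfl⟩

lemma bkf_nonneg (hU0 : U 0 = Set.univ) (g : G) : 0 ≤ bkf U g := by
  apply le_csInf (bkf_set_nonempty U hU0 g)
  rintro x ⟨n, -, rfl⟩
  positivity

lemma mem_of_bkf_le (hU0 : U 0 = Set.univ) (hmono : ∀ n m, n ≤ m → U m ⊆ U n)
    {g : G} {n : ℕ} (h : bkf U g ≤ (2:ℝ)⁻¹ ^ n) : g ∈ U n := by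
  have hlt : bkf U g < 2 * (2:ℝ)⁻¹ ^ n := by
    have : (0:ℝ) < (2:ℝ)⁻¹ ^ n := by positivity
    linarith
  obtain ⟨x, hx, hxlt⟩ := exists_lt_of_csInf_lt (bkf_set_nonempty U hU0 g) hlt
  obtain ⟨m, hm, rfl⟩ := hx
  have hnm : n ≤ m := by
    by_contra hc
    push_neg at hc
    have h1 : m + 1 ≤ n := hc
    have h2 : (2:ℝ)⁻¹ ^ n ≤ (2:ℝ)⁻¹ ^ (m+1) :=
      pow_le_pow_of_le_one (by norm_num) (by norm_num) h1
    have h3 : (2:ℝ)⁻¹ ^ (m+1) = (2:ℝ)⁻¹ ^ m * 2⁻¹ := pow_succ _ _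
    rw [h3] at h2
    nlinarith [pow_nonneg (by norm_num : (0:ℝ) ≤ 2⁻¹) m]
  exact hmono n m hnm hm

lemma bkf_sym (hsym : ∀ n, (U n)⁻¹ = U n) (g : G) : bkf U g⁻¹ = bkf U g := by
  unfold bkf
  congr 1
  ext x
  constructor
  · rintro ⟨n, hn, rfl⟩
    refine ⟨n, ?_, rfl⟩
    rw [← hsym n] at hn
    simpa using hn
  · rintro ⟨n, hn, rfl⟩
    refine ⟨n, ?_, rfl⟩
    rw [← hsym n]
    simpa using hn

lemma bkf_conj (hconj : ∀ n g a, a ∈ U n → g * a * g⁻¹ ∈ U n) (h g : G) :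
    bkf U (h * g * h⁻¹) = bkf U g := by
  unfold bkf
  congr 1
  ext x
  constructor
  · rintro ⟨n, hn, rfl⟩
    refine ⟨n, ?_, rfl⟩
    have := hconj n h⁻¹ _ hn
    simpa [mul_assoc] using this
  · rintro ⟨n, hn, rfl⟩
    exact ⟨n, hconj n h _ hn, rfl⟩

lemma bk_chain_mem (hU0 : U 0 = Set.univ) (hmem : ∀ n, U n ∈ nhds (1 : G))
    (hcube : ∀ n, U (n + 1) * U (n + 1) * U (n + 1) ⊆ U n)
    (hmono : ∀ n m, n ≤ m → U m ⊆ U n) :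
    ∀ (m : ℕ) (l : List G), l.length ≤ m → ∀ n : ℕ,
      (l.map (bkf U)).sum < (2:ℝ)⁻¹ ^ (n + 1) → l.prod ∈ U n := by
  intro m
  induction m with
  | zero =>
    intro l hl n _
    have : l = [] := List.eq_nil_of_length_eq_zero (Nat.le_zero.mp hl)
    subst this
    simpa using mem_of_mem_nhds (hmem n)
  | succ m ih =>
    intro l hl n hsum
    rcases eq_or_ne l [] with rfl | hne
    · simpa using mem_of_mem_nhds (hmem n)
    · set S := (l.map (bkf U)).sum with hS
      have hS0 : 0 ≤ S := sum_map_nonneg (bkf_nonneg U hU0) l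
      obtain ⟨l₁, x, l₂, heq, hs1, hs2⟩ :=
        list_split (bkf U) (bkf_nonneg U hU0) l hne (S / 2) (by linarith) (by linarith)
      have hpow : (2:ℝ)⁻¹ ^ (n + 1) = 2 * (2:ℝ)⁻¹ ^ (n + 2) := by
        rw [pow_succ]; ring
      have hlen : l.length = l₁.length + 1 + l₂.length := by
        rw [heq]; simp; omega
      have hmem1 : l₁.prod ∈ U (n + 1) := by
        apply ih l₁ (by omega) (n + 1)
        rw [hpow] at hsum
        linarith
      have hmem2 : l₂.prod ∈ U (n + 1) := by
        apply ih l₂ (by omega) (n + 1)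
        rw [hpow] at hsum
        linarith
      have hfx : bkf U x ≤ S := by
        have : S = (l₁.map (bkf U)).sum + (bkf U x + (l₂.map (bkf U)).sum) := by
          rw [hS, heq]; simp
        have h1 : 0 ≤ (l₁.map (bkf U)).sum := sum_map_nonneg (bkf_nonneg U hU0) l₁
        have h2 : 0 ≤ (l₂.map (bkf U)).sum := sum_map_nonneg (bkf_nonneg U hU0) l₂
        linarith
      have hmemx : x ∈ U (n + 1) := by
        apply mem_of_bkf_le U hU0 hmono
        calc bkf U x ≤ S := hfx
          _ ≤ (2:ℝ)⁻¹ ^ (n+1) := le_of_lt hsum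
      have hprod : l.prod = l₁.prod * x * l₂.prod := by
        rw [heq]; simp [mul_assoc]
      rw [hprod]
      exact hcube n (Set.mul_mem_mul (Set.mul_mem_mul hmem1 hmemx) hmem2)

end BKF

theorem exists_biinvariant_metric [FirstCountableTopology G] [T1Space G]
    (hsin : ∀ W ∈ nhds (1 : G), ∃ V ∈ nhds (1 : G), V ⊆ W ∧ ∀ g : G, ∀ a ∈ V, g * a * g⁻¹ ∈ V) :
    ∃ d : G → G → ℝ, IsCompatibleLeftInvariantMetric G d ∧
      (∀ h g f : G, d (g * h) (f * h) = d g f) := by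
  obtain ⟨U, hU0, hUmem, hUsym, hUconj, hUcube, hUbasis, hUmono⟩ := exists_chain hsin
  have h0 : ∀ g : G, 0 ≤ bkf U g := bkf_nonneg U hU0
  have hsymf : ∀ g : G, bkf U g⁻¹ = bkf U g := bkf_sym U hUsym
  have hconjf : ∀ h g : G, bkf U (h * g * h⁻¹) = bkf U g := fun h g => bkf_conj U hUconj h g
  have hchain := bk_chain_mem U hU0 hUmem hUcube hUmono
  have hlow : ∀ (n : ℕ) (g : G), g ∉ U n → (2:ℝ)⁻¹ ^ (n+1) ≤ wlen (bkf U) g := by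
    intro n g hg
    apply le_wlen
    intro l hl
    by_contra hc
    push_neg at hc
    exact hg (hl ▸ hchain l.length l le_rfl n hc)
  refine ⟨_, build_metric (bkf U) h0 hsymf ?_ ?_ ?_,
    fun h g f => build_rightinv (bkf U) h0 hconjf h g f⟩
  · intro g hg
    obtain ⟨n, hn⟩ := hUbasis {g}ᶜ
      ((isOpen_compl_singleton).mem_nhds (by simpa using (Ne.symm hg)))
    have hgU : g ∉ U n := fun h => (hn h) rfl
    calc (0:ℝ) < (2:ℝ)⁻¹ ^ (n+1) := by positivity
      _ ≤ wlen (bkf U) g := hlow n g hgU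
  · intro s hs
    obtain ⟨n, hn⟩ := hUbasis s hs
    refine ⟨(2:ℝ)⁻¹ ^ (n+1), by positivity, ?_⟩
    intro g hg
    apply hn
    by_contra hgU
    exact absurd hg (not_lt.2 (hlow n g hgU))
  · intro ε hε
    obtain ⟨n, hn⟩ := exists_pow_lt_of_lt_one hε (by norm_num : (2:ℝ)⁻¹ < 1)
    apply mem_of_superset (hUmem n)
    intro g hg
    have : wlen (bkf U) g ≤ (2:ℝ)⁻¹ ^ n := le_trans (wlen_le_w h0 g) (bkf_le U hg)
    exact lt_of_le_of_lt this hn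

section Helpers

lemma met_nonneg {d : G → G → ℝ} (hm : IsMetric d) (x y : G) : 0 ≤ d x y := by
  have h0 : d x x = 0 := (hm.1 x x).2 rfl
  have := hm.2.2 x y x
  have hsym := hm.2.1 x y
  linarith

lemma d1_mul {d : G → G → ℝ} (hd : IsCompatibleLeftInvariantMetric G d) (a b : G) :
    d 1 (a * b) ≤ d 1 a + d 1 b := by
  have h1 : d a (a * b) = d 1 b := by
    have := hd.2.2 a 1 b
    simpa using this
  have := hd.1.2.2 1 a (a * b)
  linarith

lemma d1_prod {d : G → G → ℝ} (hd : IsCompatibleLeftInvariantMetric G d) :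
    ∀ l : List G, d 1 l.prod ≤ (l.map (fun s => d 1 s)).sum := by
  intro l
  induction l with
  | nil => simp [(hd.1.1 1 1).2 rfl]
  | cons a t ih =>
    simp only [List.prod_cons, List.map_cons, List.sum_cons]
    calc d 1 (a * t.prod) ≤ d 1 a + d 1 t.prod := d1_mul hd a t.prod
      _ ≤ d 1 a + (t.map (fun s => d 1 s)).sum := by linarith

lemma open_dball {d : G → G → ℝ} (hd : IsCompatibleLeftInvariantMetric G d) (c : ℝ) :
    IsOpen {g : G | d 1 g < c} := by
  rw [isOpen_iff_mem_nhds]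
  intro x hx
  rw [hd.2.1 x]
  refine ⟨c - d 1 x, by simpa using hx, ?_⟩
  intro y hy
  simp only [Set.mem_setOf_eq] at hy ⊢
  have := hd.1.2.2 1 x y
  linarith

lemma dball_mem_nhds {d : G → G → ℝ} (hd : IsCompatibleLeftInvariantMetric G d)
    {c : ℝ} (hc : 0 < c) : {g : G | d 1 g < c} ∈ nhds (1 : G) := by
  rw [hd.2.1 1]
  exact ⟨c, hc, fun y hy => hy⟩

lemma scale_metric {d : G → G → ℝ} (hd : IsCompatibleLeftInvariantMetric G d)
    {c : ℝ} (hc : 0 < c) : IsCompatibleLeftInvariantMetric G (fun x y => c * d x y) := by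
  obtain ⟨⟨hzero, hsym, htri⟩, hcomp, hli⟩ := hd
  refine ⟨⟨?_, ?_, ?_⟩, ?_, ?_⟩
  · intro x y
    dsimp only
    rw [← hzero x y]
    constructor
    · intro h
      rcases mul_eq_zero.1 h with h | h
      · exact absurd h (ne_of_gt hc)
      · exact h
    · intro h; rw [h, mul_zero]
  · intro x y; dsimp only; rw [hsym x y]
  · intro x y z
    dsimp only
    have := htri x y z
    nlinarith
  · intro x s
    rw [hcomp x s]
    constructor
    · rintro ⟨ε, hε, hsub⟩
      refine ⟨c * ε, by positivity, ?_⟩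
      intro y hy
      apply hsub
      simp only [Set.mem_setOf_eq] at hy ⊢
      nlinarith
    · rintro ⟨ε, hε, hsub⟩
      refine ⟨ε / c, by positivity, ?_⟩
      intro y hy
      apply hsub
      simp only [Set.mem_setOf_eq] at hy ⊢
      rw [lt_div_iff₀ hc] at hy
      nlinarith
  · intro h g f
    simp only [hli h g f]

lemma pow_subset_of_le {s : Set G} (h1 : (1 : G) ∈ s) :
    ∀ {m n : ℕ}, m ≤ n → s ^ m ⊆ s ^ n := by
  intro m n h
  induction h with
  | refl => exact fun _ h => h
  | step _ ih =>
    rename_i k _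
    intro x hx
    have : x * 1 ∈ s ^ k * s := Set.mul_mem_mul (ih hx) h1
    rw [← pow_succ] at this
    simpa using this

end Helpers

section OBChar

lemma ob_of_comb {A : Set G}
    (h : ∀ V : Set G, IsOpen V → (1 : G) ∈ V → V⁻¹ = V →
      ∃ F : Finset G, (1 : G) ∈ F ∧ ∃ k : ℕ, A ⊆ (V * (F : Set G) * V) ^ k) :
    HasRelPropOB G A := by
  intro ρ hρ
  set V := {g : G | ρ 1 g < 1} ∩ (fun g : G => g⁻¹) ⁻¹' {g : G | ρ 1 g < 1} with hV
  have hρ0 : ρ 1 1 = 0 := (hρ.1.1 1 1).2 rfl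
  have hVopen : IsOpen V := ((open_dball hρ 1).inter ((open_dball hρ 1).preimage continuous_inv))
  have hV1 : (1 : G) ∈ V := by
    constructor <;> simp [hρ0]
  have hVsym : V⁻¹ = V := by
    ext x
    simp only [hV, Set.mem_inv, Set.mem_inter_iff, Set.mem_preimage, Set.mem_setOf_eq, inv_inv]
    tauto
  obtain ⟨F, hF1, k, hsub⟩ := h V hVopen hV1 hVsym
  set M := (F.image (fun f => ρ 1 f)).max' ⟨ρ 1 1, Finset.mem_image_of_mem _ hF1⟩ with hM
  have hMb : ∀ f ∈ F, ρ 1 f ≤ M := fun f hf =>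
    Finset.le_max' _ _ (Finset.mem_image_of_mem _ hf)
  have hstep : ∀ z ∈ V * (F : Set G) * V, ρ 1 z ≤ 2 + M := by
    rintro z ⟨y, hy, v', hv', rfl⟩
    obtain ⟨v, hv, f, hf, rfl⟩ := hy
    have h1 : ρ 1 v ≤ 1 := le_of_lt hv.1
    have h2 : ρ 1 v' ≤ 1 := le_of_lt hv'.1
    have h3 : ρ 1 f ≤ M := hMb f hf
    have t1 := d1_mul hρ (v * f) v'
    have t2 := d1_mul hρ v f
    linarith
  have hpow : ∀ (j : ℕ) (x : G), x ∈ (V * (F : Set G) * V) ^ j → ρ 1 x ≤ j * (2 + M) := by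
    intro j
    induction j with
    | zero =>
      intro x hx
      rw [pow_zero] at hx
      rw [Set.mem_one.1 hx]
      simp [hρ0]
    | succ j ih =>
      intro x hx
      rw [pow_succ] at hx
      obtain ⟨y, hy, z, hz, rfl⟩ := hx
      have := d1_mul hρ y z
      have h1 := ih y hy
      have h2 := hstep z hz
      push_cast
      nlinarith [met_nonneg hρ.1 (1:G) y]
  refine ⟨2 * (k * (2 + M)), ?_⟩
  intro x hx y hy
  have hx1 := hpow k x (hsub hx)
  have hy1 := hpow k y (hsub hy)
  have htri := hρ.1.2.2 x 1 y
  have hsymm := hρ.1.2.1 x 1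
  linarith

lemma comb_of_ob [TopologicalSpace.SeparableSpace G] {d0 : G → G → ℝ}
    (hd0 : IsCompatibleLeftInvariantMetric G d0) {A : Set G}
    (hA : HasRelPropOB G A)
    {V : Set G} (hVopen : IsOpen V) (hV1 : (1 : G) ∈ V) (hVsym : V⁻¹ = V) :
    ∃ F : Finset G, (1 : G) ∈ F ∧ ∃ k : ℕ, A ⊆ (V * (F : Set G) * V) ^ k := by
  classical
  by_contra hbad
  push_neg at hbad
  have : Nonempty G := ⟨1⟩
  obtain ⟨a, ha⟩ := TopologicalSpace.exists_dense_seq G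
  obtain ⟨ε, hε, hball⟩ := (hd0.2.1 1 V).1 (hVopen.mem_nhds hV1)
  set db := fun x y : G => ε⁻¹ * d0 x y with hdbdef
  have hdbm : IsCompatibleLeftInvariantMetric G db := scale_metric hd0 (by positivity)
  have hdb0 : ∀ x y, 0 ≤ db x y := fun x y => met_nonneg hdbm.1 x y
  have hdb11 : db 1 1 = 0 := (hdbm.1.1 1 1).2 rfl
  have hballdb : ∀ g, db 1 g < 1 → g ∈ V := by
    intro g hg
    apply hball
    show d0 1 g < ε
    have h2 : ε⁻¹ * d0 1 g < 1 := hg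
    have h3 : d0 1 g = ε * (ε⁻¹ * d0 1 g) := by
      field_simp
    rw [h3]
    calc ε * (ε⁻¹ * d0 1 g) < ε * 1 := by
          exact mul_lt_mul_of_pos_left h2 hε
      _ = ε := mul_one ε
  set B := {g : G | db 1 g < 1} ∩ (fun g : G => g⁻¹) ⁻¹' {g : G | db 1 g < 1} with hBdef
  have hBmem : ∀ g : G, g ∈ B ↔ db 1 g < 1 ∧ db 1 g⁻¹ < 1 := fun g => Iff.rfl
  have hBsub : B ⊆ V := fun g hg => hballdb g hg.1
  have hB1 : (1 : G) ∈ B := by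
    rw [hBmem]; simp [hdb11]
  have hBsym : ∀ g : G, g ∈ B ↔ g⁻¹ ∈ B := by
    intro g
    rw [hBmem, hBmem, inv_inv, and_comm]
  have hBopen : IsOpen B :=
    (open_dball hdbm 1).inter ((open_dball hdbm 1).preimage continuous_inv)
  set σ := fun g : G => db 1 g + db 1 g⁻¹ with hσdef
  have hσ0 : ∀ g, 0 ≤ σ g := fun g => add_nonneg (hdb0 1 g) (hdb0 1 g⁻¹)
  have hσsym : ∀ g, σ g⁻¹ = σ g := by
    intro g; simp only [hσdef, inv_inv]; ring
  set JSet := fun g : G => {c : ℝ | ∃ n : ℕ,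
    (∃ u ∈ B, ∃ v ∈ B, g = u * a n * v ∨ g = u * (a n)⁻¹ * v) ∧ c = (n : ℝ) + 1} with hJSetdef
  have hJne : ∀ g : G, (JSet g).Nonempty := by
    intro g
    have hopen : IsOpen ((g * ·) '' B) := (Homeomorph.mulLeft g).isOpenMap B hBopen
    obtain ⟨n, hn⟩ := ha.exists_mem_open hopen ⟨g, 1, hB1, mul_one g⟩
    obtain ⟨b, hb, hab⟩ := hn
    refine ⟨(n : ℝ) + 1, n, ⟨1, hB1, b⁻¹, (hBsym b).1 hb, Or.inl ?_⟩, rfl⟩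
    rw [← hab]; group
  have hJbdd : ∀ g, BddBelow (JSet g) := by
    intro g
    refine ⟨1, ?_⟩
    rintro c ⟨n, -, rfl⟩
    have : (0:ℝ) ≤ n := Nat.cast_nonneg n
    linarith
  set J := fun g : G => sInf (JSet g) with hJdef
  have hJ1 : ∀ g, 1 ≤ J g := by
    intro g
    apply le_csInf (hJne g)
    rintro c ⟨n, -, rfl⟩
    have : (0:ℝ) ≤ n := Nat.cast_nonneg n
    linarith
  have hJsym : ∀ g, J g⁻¹ = J g := by
    intro g
    have key : ∀ x : G, JSet x ⊆ JSet x⁻¹ := by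
      rintro x c ⟨n, ⟨u, hu, v, hv, hor⟩, rfl⟩
      refine ⟨n, ⟨v⁻¹, (hBsym v).1 hv, u⁻¹, (hBsym u).1 hu, ?_⟩, rfl⟩
      rcases hor with h | h
      · right; rw [h]; group
      · left; rw [h]; group
    have h1 := key g
    have h2 := key g⁻¹
    rw [inv_inv] at h2
    simp only [hJdef]
    exact le_antisymm (csInf_le_csInf (hJbdd g⁻¹) (hJne g) h1)
      (csInf_le_csInf (hJbdd g) (hJne g⁻¹) h2)
  set w := fun g : G => if g ∈ B then σ g else J g with hwdef
  have h0 : ∀ g, 0 ≤ w g := by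
    intro g
    by_cases hg : g ∈ B
    · simp only [hwdef, if_pos hg]; exact hσ0 g
    · simp only [hwdef, if_neg hg]; linarith [hJ1 g]
  have hwB : ∀ g ∈ B, w g = σ g := fun g hg => if_pos hg
  have hwJ : ∀ g, g ∉ B → w g = J g := fun g hg => if_neg hg
  have hwsym : ∀ g : G, w g⁻¹ = w g := by
    intro g
    by_cases hg : g ∈ B
    · rw [hwB _ ((hBsym g).1 hg), hwB _ hg, hσsym]
    · have hg' : g⁻¹ ∉ B := fun hcon => hg (by simpa using (hBsym g⁻¹).1 hcon)
      rw [hwJ _ hg', hwJ _ hg, hJsym]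
  -- lower bound for wlen
  have hminle : ∀ g : G, min (db 1 g) 1 ≤ wlen w g := by
    intro g
    apply le_wlen
    intro l hl
    by_cases hall : ∀ s ∈ l, w s < 1
    · have hle : ∀ s ∈ l, db 1 s ≤ w s := by
        intro s hs
        by_cases hsB : s ∈ B
        · rw [hwB _ hsB]
          have := hdb0 1 s⁻¹
          simp only [hσdef]; linarith
        · exfalso
          have := hall s hs
          rw [hwJ _ hsB] at this
          linarith [hJ1 s]
      have hsum : (l.map (fun s => db 1 s)).sum ≤ (l.map w).sum := by
        apply List.sum_le_sum
        intro s hs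
        exact hle s hs
      calc min (db 1 g) 1 ≤ db 1 g := min_le_left _ _
        _ = db 1 l.prod := by rw [hl]
        _ ≤ (l.map (fun s => db 1 s)).sum := d1_prod hdbm l
        _ ≤ (l.map w).sum := hsum
    · push_neg at hall
      obtain ⟨s, hs, hs1⟩ := hall
      calc min (db 1 g) 1 ≤ 1 := min_le_right _ _
        _ ≤ w s := hs1
        _ ≤ (l.map w).sum := List.single_le_sum (by
            intro x hx
            obtain ⟨y, hy, rfl⟩ := List.mem_map.1 hx
            exact h0 y) _ (List.mem_map_of_mem (f := w) hs)
  -- build the metric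
  have hδ : IsCompatibleLeftInvariantMetric G (fun x y => wlen w (x⁻¹ * y)) := by
    apply build_metric w h0 hwsym
    · intro g hg
      have hpos : 0 < db 1 g := by
        rcases lt_or_eq_of_le (hdb0 1 g) with h | h
        · exact h
        · exfalso; exact hg (((hdbm.1.1 1 g).1 h.symm).symm)
      calc (0:ℝ) < min (db 1 g) 1 := lt_min hpos one_pos
        _ ≤ wlen w g := hminle g
    · intro s hs
      obtain ⟨ε', hε', hsub⟩ := (hdbm.2.1 1 s).1 hs
      refine ⟨min ε' 1, lt_min hε' one_pos, ?_⟩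
      intro g hg
      simp only [Set.mem_setOf_eq] at hg
      have h1 := hminle g
      have h2 : min (db 1 g) 1 < min ε' 1 := lt_of_le_of_lt h1 hg
      apply hsub
      show db 1 g < ε'
      rcases le_or_gt 1 (db 1 g) with h | h
      · exfalso
        have : min (db 1 g) 1 = 1 := min_eq_right h
        rw [this] at h2
        have := min_le_right ε' 1
        linarith
      · have : min (db 1 g) 1 = db 1 g := min_eq_left (le_of_lt h)
        rw [this] at h2
        exact lt_of_lt_of_le h2 (min_le_left _ _)
    · intro ε' hε'
      have hc : (0:ℝ) < min (ε' / 2) (1 / 2) := lt_min (by linarith) (by norm_num)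
      have hinv : Filter.Tendsto (fun g : G => g⁻¹) (nhds 1) (nhds (1 : G)) := by
        simpa using continuous_inv.tendsto (1 : G)
      have hmem : {g : G | db 1 g < min (ε' / 2) (1 / 2)} ∩
          (fun g : G => g⁻¹) ⁻¹' {g : G | db 1 g < min (ε' / 2) (1 / 2)} ∈ nhds (1 : G) :=
        Filter.inter_mem (dball_mem_nhds hdbm hc) (hinv (dball_mem_nhds hdbm hc))
      apply Filter.mem_of_superset hmem
      rintro g ⟨hg1, hg2⟩
      simp only [Set.mem_setOf_eq, Set.mem_preimage] at hg1 hg2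
      have hgB : g ∈ B := by
        rw [hBmem]
        constructor
        · exact lt_of_lt_of_le hg1 (le_trans (min_le_right _ _) (by norm_num))
        · exact lt_of_lt_of_le hg2 (le_trans (min_le_right _ _) (by norm_num))
      show wlen w g < ε'
      calc wlen w g ≤ w g := wlen_le_w h0 g
        _ = σ g := hwB _ hgB
        _ < ε' := by
            have a1 : db 1 g < ε' / 2 := lt_of_lt_of_le hg1 (min_le_left _ _)
            have a2 : db 1 g⁻¹ < ε' / 2 := lt_of_lt_of_le hg2 (min_le_left _ _)
            simp only [hσdef]; linarith
  obtain ⟨C, hC⟩ := hA _ hδ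
  rcases A.eq_empty_or_nonempty with rfl | ⟨a₀, ha₀⟩
  · exact hbad {1} (Finset.mem_singleton_self 1) 0 (Set.empty_subset _)
  set R := wlen w a₀ + C with hR
  set N : ℕ := ⌈R⌉₊ + 1 with hN
  set F : Finset G := insert (1 : G)
    ((Finset.range (N + 1)).image a ∪ (Finset.range (N + 1)).image (fun n => (a n)⁻¹)) with hF
  have hF1 : (1 : G) ∈ F := Finset.mem_insert_self _ _
  have hVFV1 : (1 : G) ∈ V * (F : Set G) * V := by
    have : (1:G) * 1 * 1 ∈ V * (F : Set G) * V :=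
      Set.mul_mem_mul (Set.mul_mem_mul hV1 (by exact_mod_cast hF1)) hV1
    simpa using this
  have hstepB : ∀ s ∈ B, s ∈ V * (F : Set G) * V := by
    intro s hs
    have : s * 1 * 1 ∈ V * (F : Set G) * V :=
      Set.mul_mem_mul (Set.mul_mem_mul (hBsub hs) (by exact_mod_cast hF1)) hV1
    simpa using this
  have hstepJ : ∀ s : G, s ∉ B → w s ≤ (N : ℝ) → s ∈ V * (F : Set G) * V := by
    intro s hsB hsN
    rw [hwJ _ hsB] at hsN
    have hlt : J s < (N : ℝ) + 1 := lt_of_le_of_lt hsN (lt_add_one _)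
    obtain ⟨c, hcmem, hclt⟩ := exists_lt_of_csInf_lt (hJne s) hlt
    obtain ⟨n, ⟨u, hu, v, hv, hor⟩, rfl⟩ := hcmem
    have hnN : n ∈ Finset.range (N + 1) := by
      rw [Finset.mem_range]
      have : (n : ℝ) < N := by linarith
      exact_mod_cast Nat.lt_of_lt_of_le (by exact_mod_cast this) (Nat.le_succ N)
    have haF : a n ∈ F := by
      rw [hF]
      apply Finset.mem_insert_of_mem
      exact Finset.mem_union_left _ (Finset.mem_image_of_mem a hnN)
    have haF' : (a n)⁻¹ ∈ F := by
      rw [hF]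
      apply Finset.mem_insert_of_mem
      exact Finset.mem_union_right _ (Finset.mem_image_of_mem _ hnN)
    rcases hor with h | h
    · rw [h]
      exact Set.mul_mem_mul (Set.mul_mem_mul (hBsub hu) (by exact_mod_cast haF)) (hBsub hv)
    · rw [h]
      exact Set.mul_mem_mul (Set.mul_mem_mul (hBsub hu) (by exact_mod_cast haF')) (hBsub hv)
  -- merging helper
  have hmerge : ∀ s s' : G, s ∈ B → s' ∈ B → w s + w s' < 1 →
      s * s' ∈ B ∧ w (s * s') ≤ w s + w s' := by
    intro s s' hs hs' hlt
    rw [hwB _ hs, hwB _ hs'] at hlt ⊢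
    have d1 : db 1 (s * s') ≤ db 1 s + db 1 s' := d1_mul hdbm s s'
    have d2 : db 1 (s * s')⁻¹ ≤ db 1 s'⁻¹ + db 1 s⁻¹ := by
      rw [mul_inv_rev]
      exact d1_mul hdbm s'⁻¹ s⁻¹
    have hσs := hσ0 s
    have hσs' := hσ0 s'
    have hb1 : db 1 (s * s') < 1 := by
      simp only [hσdef] at hlt
      have := hdb0 1 s⁻¹; have := hdb0 1 s'⁻¹
      linarith
    have hb2 : db 1 (s * s')⁻¹ < 1 := by
      simp only [hσdef] at hlt
      have := hdb0 1 s; have := hdb0 1 s'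
      linarith
    have hmemB : s * s' ∈ B := by rw [hBmem]; exact ⟨hb1, hb2⟩
    refine ⟨hmemB, ?_⟩
    rw [hwB _ hmemB]
    simp only [hσdef] at *
    linarith
  -- extraction lemma
  have hext : ∀ (m : ℕ) (l : List G), l.length ≤ m → (l.map w).sum ≤ (N : ℝ) →
      ∃ j : ℕ, (j : ℝ) ≤ 2 * (l.map w).sum + 1 ∧ l.prod ∈ (V * (F : Set G) * V) ^ j := by
    intro m
    induction m with
    | zero =>
      intro l hl _
      have : l = [] := List.eq_nil_of_length_eq_zero (Nat.le_zero.mp hl)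
      subst this
      refine ⟨0, by simp, by simp⟩
    | succ m ih =>
      intro l hl hsum
      rcases l with _ | ⟨s, t⟩
      · refine ⟨0, by simp, by simp⟩
      · have hsumt : (t.map w).sum ≤ (N : ℝ) := by
          simp only [List.map_cons, List.sum_cons] at hsum
          have := h0 s
          linarith
        have hws : w s ≤ (N : ℝ) := by
          simp only [List.map_cons, List.sum_cons] at hsum
          have := sum_map_nonneg h0 t
          linarith
        by_cases hsB : s ∈ B
        · rcases t with _ | ⟨s', t'⟩
          · -- single small step
            refine ⟨1, ?_, ?_⟩
            · simp only [List.map_cons, List.map_nil, List.sum_cons, List.sum_nil, add_zero]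
              have := h0 s
              push_cast
              linarith
            · simp only [List.prod_cons, List.prod_nil, mul_one, pow_one]
              exact hstepB s hsB
          · by_cases hs'B : s' ∈ B
            · by_cases hlt : w s + w s' < 1
              · -- merge
                obtain ⟨hmB, hmw⟩ := hmerge s s' hsB hs'B hlt
                have hlen : ((s * s') :: t').length ≤ m := by
                  simp only [List.length_cons] at hl ⊢
                  omega
                have hsum' : (((s * s') :: t').map w).sum ≤ (N : ℝ) := by
                  simp only [List.map_cons, List.sum_cons] at hsum ⊢
                  linarith
                obtain ⟨j, hj, hmem⟩ := ih ((s * s') :: t') hlen hsum'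
                refine ⟨j, ?_, ?_⟩
                · simp only [List.map_cons, List.sum_cons] at hj ⊢
                  linarith
                · simp only [List.prod_cons] at hmem ⊢
                  rw [← mul_assoc]
                  exact hmem
              · -- two small steps with total weight ≥ 1
                push_neg at hlt
                have hlen : t'.length ≤ m := by
                  simp only [List.length_cons] at hl; omega
                have hsum' : (t'.map w).sum ≤ (N : ℝ) := by
                  simp only [List.map_cons, List.sum_cons] at hsumt
                  have := h0 s'
                  linarith
                obtain ⟨j, hj, hmem⟩ := ih t' hlen hsum'
                refine ⟨j + 2, ?_, ?_⟩
                · simp only [List.map_cons, List.sum_cons]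
                  push_cast
                  linarith
                · simp only [List.prod_cons]
                  have h2 : s' * t'.prod ∈ (V * (F : Set G) * V) ^ (j + 1) := by
                    rw [pow_succ']
                    exact Set.mul_mem_mul (hstepB s' hs'B) hmem
                  rw [show j + 2 = (j + 1) + 1 by ring, pow_succ']
                  exact Set.mul_mem_mul (hstepB s hsB) h2
            · -- s small, s' a jump
              have hws' : w s' ≤ (N : ℝ) := by
                simp only [List.map_cons, List.sum_cons] at hsumt
                have := sum_map_nonneg h0 t'
                linarith
              have hs'1 : 1 ≤ w s' := by rw [hwJ _ hs'B]; exact hJ1 s'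
              have hlen : t'.length ≤ m := by
                simp only [List.length_cons] at hl; omega
              have hsum' : (t'.map w).sum ≤ (N : ℝ) := by
                simp only [List.map_cons, List.sum_cons] at hsumt
                linarith
              obtain ⟨j, hj, hmem⟩ := ih t' hlen hsum'
              refine ⟨j + 2, ?_, ?_⟩
              · simp only [List.map_cons, List.sum_cons]
                have := h0 s
                push_cast
                linarith
              · simp only [List.prod_cons]
                have h2 : s' * t'.prod ∈ (V * (F : Set G) * V) ^ (j + 1) := by
                  rw [pow_succ']
                  exact Set.mul_mem_mul (hstepJ s' hs'B hws') hmem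
                rw [show j + 2 = (j + 1) + 1 by ring, pow_succ']
                exact Set.mul_mem_mul (hstepB s hsB) h2
        · -- jump step
          have hs1 : 1 ≤ w s := by rw [hwJ _ hsB]; exact hJ1 s
          have hlen : t.length ≤ m := by
            simp only [List.length_cons] at hl; omega
          obtain ⟨j, hj, hmem⟩ := ih t hlen hsumt
          refine ⟨j + 1, ?_, ?_⟩
          · simp only [List.map_cons, List.sum_cons]
            push_cast
            linarith
          · simp only [List.prod_cons]
            rw [pow_succ']
            exact Set.mul_mem_mul (hstepJ s hsB hws) hmem
  -- conclude
  apply hbad F hF1 (2 * N + 1)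
  intro x hx
  have hxle : wlen w x ≤ R := by
    have h1 : wlen w x ≤ wlen w a₀ + wlen w (a₀⁻¹ * x) := by
      have := wlen_mul h0 a₀ (a₀⁻¹ * x)
      simpa [mul_assoc] using this
    have h2 : wlen w (a₀⁻¹ * x) ≤ C := hC a₀ ha₀ x hx
    rw [hR]
    linarith
  have hxN : wlen w x < (N : ℝ) := by
    have h1 : R ≤ (⌈R⌉₊ : ℝ) := Nat.le_ceil R
    have h2 : ((⌈R⌉₊ : ℕ) : ℝ) < (N : ℝ) := by
      rw [hN]; push_cast; linarith
    linarith
  obtain ⟨c, hcmem, hclt⟩ := exists_lt_of_csInf_lt (chainCosts_nonempty x) hxN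
  obtain ⟨l, hl, rfl⟩ := hcmem
  obtain ⟨j, hj, hmem⟩ := hext l.length l le_rfl (le_of_lt hclt)
  have hjN : j ≤ 2 * N + 1 := by
    have : (j : ℝ) ≤ 2 * (N : ℝ) + 1 := by linarith
    exact_mod_cast this
  rw [← hl]
  exact pow_subset_of_le hVFV1 hjN hmem

end OBChar

section OBClosure

lemma ob_subset {A B : Set G} (hB : HasRelPropOB G B) (hAB : A ⊆ B) :
    HasRelPropOB G A := by
  intro d hd
  obtain ⟨C, hC⟩ := hB d hd
  exact ⟨C, fun x hx y hy => hC x (hAB hx) y (hAB hy)⟩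

lemma ob_of_finite {A : Set G} (hA : A.Finite) : HasRelPropOB G A := by
  intro d hd
  rcases A.eq_empty_or_nonempty with rfl | hne
  · exact ⟨0, by simp⟩
  · obtain ⟨C, hC⟩ := ((hA.prod hA).image (fun p => d p.1 p.2)).bddAbove
    refine ⟨C, fun x hx y hy => ?_⟩
    exact hC ⟨(x, y), Set.mk_mem_prod hx hy, rfl⟩

lemma ob_union {A B : Set G} (hA : HasRelPropOB G A) (hB : HasRelPropOB G B) :
    HasRelPropOB G (A ∪ B) := by
  intro d hd
  obtain ⟨CA, hCA⟩ := hA d hd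
  obtain ⟨CB, hCB⟩ := hB d hd
  rcases A.eq_empty_or_nonempty with rfl | ⟨a, haA⟩
  · simpa using hB d hd
  rcases B.eq_empty_or_nonempty with rfl | ⟨b, hbB⟩
  · simpa using hA d hd
  have hCA0 : 0 ≤ CA := le_trans (met_nonneg hd.1 a a) (hCA a haA a haA)
  have hCB0 : 0 ≤ CB := le_trans (met_nonneg hd.1 b b) (hCB b hbB b hbB)
  have hab0 : 0 ≤ d a b := met_nonneg hd.1 a b
  refine ⟨CA + CB + d a b, ?_⟩
  rintro x (hx | hx) y (hy | hy)
  · have := hCA x hx y hy; linarith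
  · have h1 := hCA x hx a haA
    have h2 := hCB b hbB y hy
    have t1 := hd.1.2.2 x a y
    have t2 := hd.1.2.2 a b y
    linarith
  · have h1 := hCB x hx b hbB
    have h2 := hCA a haA y hy
    have t1 := hd.1.2.2 x b y
    have t2 := hd.1.2.2 b a y
    have hs := hd.1.2.1 a b
    linarith
  · have := hCB x hx y hy; linarith

variable [TopologicalSpace.SeparableSpace G] {d0 : G → G → ℝ}

lemma ob_inv (hd0 : IsCompatibleLeftInvariantMetric G d0) {A : Set G}
    (hA : HasRelPropOB G A) : HasRelPropOB G A⁻¹ := by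
  classical
  apply ob_of_comb
  intro V hVopen hV1 hVsym
  obtain ⟨F, hF1, k, hsub⟩ := comb_of_ob hd0 hA hVopen hV1 hVsym
  refine ⟨F.image (·⁻¹), ?_, k, ?_⟩
  · simpa using Finset.mem_image_of_mem (·⁻¹) hF1
  · intro x hx
    have hxA : x⁻¹ ∈ A := hx
    have hmem : x⁻¹ ∈ (V * (F : Set G) * V) ^ k := hsub hxA
    have hcoe : ((F.image (·⁻¹) : Finset G) : Set G) = ((F : Set G))⁻¹ := by
      rw [Finset.coe_image, Set.image_inv_eq_inv]
    have key : ((V * (F : Set G) * V) ^ k)⁻¹ = (V * ((F.image (·⁻¹) : Finset G) : Set G) * V) ^ k := by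
      rw [← inv_pow]
      congr 1
      rw [mul_inv_rev, mul_inv_rev, hVsym, hcoe]
      rw [mul_assoc]
    rw [← key]
    simpa using hmem
  
lemma ob_mul (hd0 : IsCompatibleLeftInvariantMetric G d0) {A B : Set G}
    (hA : HasRelPropOB G A) (hB : HasRelPropOB G B) : HasRelPropOB G (A * B) := by
  classical
  apply ob_of_comb
  intro V hVopen hV1 hVsym
  obtain ⟨F, hF1, k, hsubA⟩ := comb_of_ob hd0 hA hVopen hV1 hVsym
  obtain ⟨F', hF'1, k', hsubB⟩ := comb_of_ob hd0 hB hVopen hV1 hVsym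
  refine ⟨F ∪ F', Finset.mem_union_left _ hF1, k + k', ?_⟩
  have hFsub : (F : Set G) ⊆ ((F ∪ F' : Finset G) : Set G) := by
    intro x hx; simp only [Finset.coe_union, Set.mem_union]; exact Or.inl hx
  have hF'sub : (F' : Set G) ⊆ ((F ∪ F' : Finset G) : Set G) := by
    intro x hx; simp only [Finset.coe_union, Set.mem_union]; exact Or.inr hx
  have hmul1 : V * (F : Set G) * V ⊆ V * ((F ∪ F' : Finset G) : Set G) * V :=
    Set.mul_subset_mul (Set.mul_subset_mul_left hFsub) subset_rfl
  have hmul2 : V * (F' : Set G) * V ⊆ V * ((F ∪ F' : Finset G) : Set G) * V :=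
    Set.mul_subset_mul (Set.mul_subset_mul_left hF'sub) subset_rfl
  have hpow1 : (V * (F : Set G) * V) ^ k ⊆ (V * ((F ∪ F' : Finset G) : Set G) * V) ^ k := by
    apply Set.pow_subset_pow_left hmul1
  have hpow2 : (V * (F' : Set G) * V) ^ k' ⊆ (V * ((F ∪ F' : Finset G) : Set G) * V) ^ k' := by
    apply Set.pow_subset_pow_left hmul2
  calc A * B ⊆ (V * ((F ∪ F' : Finset G) : Set G) * V) ^ k *
        (V * ((F ∪ F' : Finset G) : Set G) * V) ^ k' :=
        Set.mul_subset_mul (fun x hx => hpow1 (hsubA hx)) (fun x hx => hpow2 (hsubB hx))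
    _ = (V * ((F ∪ F' : Finset G) : Set G) * V) ^ (k + k') := (pow_add _ _ _).symm

lemma ob_pow (hd0 : IsCompatibleLeftInvariantMetric G d0) {A : Set G}
    (hA : HasRelPropOB G A) : ∀ n : ℕ, HasRelPropOB G (A ^ n) := by
  intro n
  induction n with
  | zero =>
    rw [pow_zero]
    exact ob_of_finite (Set.finite_one)
  | succ n ih =>
    rw [pow_succ]
    exact ob_mul hd0 ih hA

end OBClosure

section PowHelpers

lemma one_mem_pow {s : Set G} (h1 : (1 : G) ∈ s) : ∀ n : ℕ, (1 : G) ∈ s ^ n := by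
  intro n
  induction n with
  | zero => simp
  | succ n ih =>
    rw [pow_succ]
    simpa using Set.mul_mem_mul ih h1

lemma inv_mem_pow {s : Set G} (hs : ∀ x ∈ s, x⁻¹ ∈ s) :
    ∀ (n : ℕ) (x : G), x ∈ s ^ n → x⁻¹ ∈ s ^ n := by
  intro n
  induction n with
  | zero => intro x hx; rw [pow_zero] at *; rw [Set.mem_one] at hx; simp [hx]
  | succ n ih =>
    intro x hx
    rw [pow_succ] at hx
    obtain ⟨y, hy, z, hz, rfl⟩ := hx
    rw [mul_inv_rev, pow_succ']
    exact Set.mul_mem_mul (hs z hz) (ih y hy)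

lemma conj_mem_pow {s : Set G} (hs : ∀ g x, x ∈ s → g * x * g⁻¹ ∈ s) :
    ∀ (n : ℕ) (g x : G), x ∈ s ^ n → g * x * g⁻¹ ∈ s ^ n := by
  intro n
  induction n with
  | zero =>
    intro g x hx
    rw [pow_zero] at *
    rw [Set.mem_one] at hx
    simp [hx]
  | succ n ih =>
    intro g x hx
    rw [pow_succ] at hx ⊢
    obtain ⟨y, hy, z, hz, rfl⟩ := hx
    have : g * (y * z) * g⁻¹ = (g * y * g⁻¹) * (g * z * g⁻¹) := by group
    rw [this]
    exact Set.mul_mem_mul (ih g y hy) (hs g z hz)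

lemma subset_conjClosure (A : Set G) : A ⊆ ConjClosure A := by
  intro x hx
  exact ⟨x, hx, 1, by group⟩

lemma conjClosure_conj {A : Set G} (g x : G) (hx : x ∈ ConjClosure A) :
    g * x * g⁻¹ ∈ ConjClosure A := by
  obtain ⟨b, hb, h, rfl⟩ := hx
  exact ⟨b, hb, g * h, by group⟩

lemma conjClosure_inv {A : Set G} (hA : ∀ x ∈ A, x⁻¹ ∈ A) (x : G)
    (hx : x ∈ ConjClosure A) : x⁻¹ ∈ ConjClosure A := by
  obtain ⟨b, hb, h, rfl⟩ := hx
  exact ⟨b⁻¹, hA b hb, h, by group⟩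

lemma conjClosure_mono {A B : Set G} (h : A ⊆ B) : ConjClosure A ⊆ ConjClosure B := by
  rintro x ⟨b, hb, g, rfl⟩
  exact ⟨b, h hb, g, rfl⟩

end PowHelpers

theorem backward_direction [FirstCountableTopology G] [T1Space G]
    [TopologicalSpace.SeparableSpace G]
    (hsin : ∀ U ∈ nhds (1 : G), ∃ V ∈ nhds (1 : G), V ⊆ U ∧ ∀ g : G, ∀ a ∈ V, g * a * g⁻¹ ∈ V)
    (hloc : ∃ U ∈ nhds (1 : G), HasRelPropOB G U)
    (hconjOB : ∀ A : Set G, HasRelPropOB G A → HasRelPropOB G (ConjClosure A)) :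
    ∃ d : G → G → ℝ, IsCompatibleLeftInvariantMetric G d ∧
      (∀ h g f : G, d (g * h) (f * h) = d g f) ∧ MetricallyProperMetric G d := by
  classical
  have hne : Nonempty G := ⟨1⟩
  obtain ⟨d1', hd1', hri'⟩ := exists_biinvariant_metric hsin
  obtain ⟨U, hUmem, hUOB⟩ := hloc
  obtain ⟨ε, hε, hball'⟩ := (hd1'.2.1 1 U).1 hUmem
  set d1 := fun x y : G => ε⁻¹ * d1' x y with hd1def
  have hd1 : IsCompatibleLeftInvariantMetric G d1 := scale_metric hd1' (inv_pos.2 hε)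
  have hri : ∀ h g f : G, d1 (g * h) (f * h) = d1 g f := by
    intro h g f
    simp only [hd1def, hri' h g f]
  have hd10 : ∀ x y, 0 ≤ d1 x y := fun x y => met_nonneg hd1.1 x y
  have hball : ∀ g : G, d1 1 g < 1 → g ∈ U := by
    intro g hg
    apply hball'
    show d1' 1 g < ε
    have h2 : ε⁻¹ * d1' 1 g < 1 := hg
    have h3 : d1' 1 g = ε * (ε⁻¹ * d1' 1 g) := by field_simp
    rw [h3]
    calc ε * (ε⁻¹ * d1' 1 g) < ε * 1 := mul_lt_mul_of_pos_left h2 hε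
      _ = ε := mul_one ε
  have hd1sym1 : ∀ g : G, d1 1 g⁻¹ = d1 1 g := by
    intro g
    have h1 : d1 (1 * g) (g⁻¹ * g) = d1 1 g⁻¹ := hri g 1 g⁻¹
    have h2 : d1 (1 * g) (g⁻¹ * g) = d1 g 1 := by simp
    have h3 : d1 g 1 = d1 1 g := hd1.1.2.1 g 1
    linarith
  have hd1conj : ∀ h g : G, d1 1 (h * g * h⁻¹) = d1 1 g := by
    intro h g
    have h1 : d1 (1 * h) ((h * g * h⁻¹) * h) = d1 1 (h * g * h⁻¹) := hri h 1 (h * g * h⁻¹)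
    have h2 : (h * g * h⁻¹) * h = h * g := by group
    have h3 : d1 (h * 1) (h * g) = d1 1 g := hd1.2.2 h 1 g
    rw [h2] at h1
    rw [← h1, ← h3]
    norm_num
  obtain ⟨a, ha⟩ := TopologicalSpace.exists_dense_seq G
  set O := interior U with hOdef
  have hOopen : IsOpen O := isOpen_interior
  have hO1 : (1 : G) ∈ O := mem_interior_iff_mem_nhds.2 hUmem
  have hOU : O ⊆ U := interior_subset
  set W := ConjClosure (U ∪ U⁻¹) with hWdef
  have hWOB : HasRelPropOB G W := hconjOB _ (ob_union hUOB (ob_inv hd1 hUOB))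
  have hUW : U ⊆ W := fun x hx => subset_conjClosure _ (Or.inl hx)
  have h1U : (1 : G) ∈ U := mem_of_mem_nhds hUmem
  have h1W : (1 : G) ∈ W := hUW h1U
  have hWinv : ∀ x ∈ W, x⁻¹ ∈ W := by
    apply conjClosure_inv
    rintro x (hx | hx)
    · exact Or.inr (by simpa using hx)
    · exact Or.inl (by simpa using hx)
  set S : ℕ → Set G := fun n => W ∪ {g | ∃ i ≤ n, g = a i ∨ g = (a i)⁻¹} with hSdef
  have hSOB : ∀ n, HasRelPropOB G (S n) := by
    intro n
    apply ob_union hWOB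
    apply ob_of_finite
    have hsub : {g | ∃ i ≤ n, g = a i ∨ g = (a i)⁻¹} ⊆
        (((Finset.range (n + 1)).image a : Finset G) : Set G) ∪
        (((Finset.range (n + 1)).image (fun i => (a i)⁻¹) : Finset G) : Set G) := by
      rintro g ⟨i, hi, h | h⟩
      · left
        simp only [Finset.coe_image, Set.mem_image, Finset.mem_coe, Finset.mem_range]
        exact ⟨i, by omega, h.symm⟩
      · right
        simp only [Finset.coe_image, Set.mem_image, Finset.mem_coe, Finset.mem_range]
        exact ⟨i, by omega, h.symm⟩
    exact Set.Finite.subset ((Finset.finite_toSet _).union (Finset.finite_toSet _)) hsub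
  have hSinv : ∀ n, ∀ x ∈ S n, x⁻¹ ∈ S n := by
    rintro n x (hx | ⟨i, hi, h | h⟩)
    · exact Or.inl (hWinv x hx)
    · exact Or.inr ⟨i, hi, Or.inr (by rw [h])⟩
    · exact Or.inr ⟨i, hi, Or.inl (by rw [h]; simp)⟩
  have hSmono : ∀ n m, n ≤ m → S n ⊆ S m := by
    rintro n m hnm x (hx | ⟨i, hi, h⟩)
    · exact Or.inl hx
    · exact Or.inr ⟨i, le_trans hi hnm, h⟩
  have h1S : ∀ n, (1 : G) ∈ S n := fun n => Or.inl h1W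
  set T : ℕ → Set G := fun n => ConjClosure (S n) with hTdef
  have hTOB : ∀ n, HasRelPropOB G (T n) := fun n => hconjOB _ (hSOB n)
  have h1T : ∀ n, (1 : G) ∈ T n := fun n => subset_conjClosure _ (h1S n)
  have hTinv : ∀ n, ∀ x ∈ T n, x⁻¹ ∈ T n := fun n => conjClosure_inv (hSinv n)
  have hTconj : ∀ n (g x : G), x ∈ T n → g * x * g⁻¹ ∈ T n :=
    fun n g x hx => conjClosure_conj g x hx
  have hTmono : ∀ n m, n ≤ m → T n ⊆ T m := fun n m hnm => conjClosure_mono (hSmono n m hnm)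
  have hUT : ∀ n, U ⊆ T n := fun n x hx => subset_conjClosure _ (Or.inl (hUW hx))
  set E : ℕ → Set G := fun n => T n ^ n with hEdef
  have hEmul : ∀ n m, E n * E m ⊆ E (n + m) := by
    intro n m
    calc T n ^ n * T m ^ m ⊆ T (n + m) ^ n * T (n + m) ^ m :=
          Set.mul_subset_mul (Set.pow_subset_pow_left (hTmono n (n+m) (by omega)))
            (Set.pow_subset_pow_left (hTmono m (n+m) (by omega)))
      _ = T (n + m) ^ (n + m) := (pow_add _ _ _).symm
  have hE1 : ∀ g : G, d1 1 g < 1 → g ∈ E 1 := by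
    intro g hg
    show g ∈ T 1 ^ 1
    rw [pow_one]
    exact hUT 1 (hball g hg)
  have hEmono : ∀ n m, n ≤ m → E n ⊆ E m := by
    intro n m hnm
    calc T n ^ n ⊆ T m ^ n := Set.pow_subset_pow_left (hTmono n m hnm)
      _ ⊆ T m ^ m := pow_subset_of_le (h1T m) hnm
  have hEinv : ∀ n, ∀ x ∈ E n, x⁻¹ ∈ E n := fun n => inv_mem_pow (hTinv n) n
  have hEconj : ∀ n (g x : G), x ∈ E n → g * x * g⁻¹ ∈ E n :=
    fun n => conj_mem_pow (hTconj n) n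
  have hEOB : ∀ n, HasRelPropOB G (E n) := fun n => ob_pow hd1 (hTOB n) n
  have h1E : ∀ n, (1 : G) ∈ E n := fun n => one_mem_pow (h1T n) n
  have hexh : ∀ g : G, {n : ℕ | g ∈ E n}.Nonempty := by
    intro g
    have hopen : IsOpen ((g * ·) '' O) := (Homeomorph.mulLeft g).isOpenMap O hOopen
    obtain ⟨i, hi⟩ := ha.exists_mem_open hopen ⟨g, 1, hO1, mul_one g⟩
    obtain ⟨o, ho, hio⟩ := hi
    have hgo : g = a i * o⁻¹ := by rw [← hio]; group
    refine ⟨max i 2, ?_⟩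
    show g ∈ T (max i 2) ^ (max i 2)
    have hai : a i ∈ T (max i 2) :=
      subset_conjClosure _ (Or.inr ⟨i, le_max_left _ _, Or.inl rfl⟩)
    have hoi : o⁻¹ ∈ T (max i 2) :=
      subset_conjClosure _ (Or.inl (hWinv o (hUW (hOU ho))))
    have hmem2 : g ∈ T (max i 2) ^ 2 := by
      rw [sq, hgo]
      exact Set.mul_mem_mul hai hoi
    exact pow_subset_of_le (h1T _) (le_max_right i 2) hmem2
  set L : G → ℕ := fun g => sInf {n : ℕ | g ∈ E n} with hLdef
  have hLmem : ∀ g, g ∈ E (L g) := fun g => Nat.sInf_mem (hexh g)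
  have hLle : ∀ (g : G) (n : ℕ), g ∈ E n → L g ≤ n := fun g n h => Nat.sInf_le h
  have hLmul : ∀ g h : G, L (g * h) ≤ L g + L h := fun g h =>
    hLle _ _ (hEmul _ _ (Set.mul_mem_mul (hLmem g) (hLmem h)))
  have hLinv : ∀ g : G, L g⁻¹ = L g := by
    intro g
    apply le_antisymm
    · exact hLle _ _ (hEinv _ _ (hLmem g))
    · have := hLle _ _ (hEinv _ _ (hLmem g⁻¹))
      simpa using this
  have hLconj : ∀ h g : G, L (h * g * h⁻¹) = L g := by
    intro h g
    apply le_antisymm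
    · exact hLle _ _ (hEconj _ h g (hLmem g))
    · have h1 := hLle _ _ (hEconj _ h⁻¹ (h * g * h⁻¹) (hLmem (h * g * h⁻¹)))
      have h2 : h⁻¹ * (h * g * h⁻¹) * h⁻¹⁻¹ = g := by group
      rwa [h2] at h1
  have hL1 : ∀ g : G, g ≠ 1 → 1 ≤ L g := by
    intro g hg
    by_contra hc
    push_neg at hc
    have h0 : L g = 0 := by omega
    have := hLmem g
    rw [h0] at this
    have : g ∈ T 0 ^ 0 := this
    rw [pow_zero, Set.mem_one] at this
    exact hg this
  have hLball : ∀ g : G, d1 1 g < 1 → L g ≤ 1 := fun g h => hLle _ _ (hE1 g h)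
  have hd111 : d1 1 1 = 0 := (hd1.1.1 1 1).2 rfl
  set w : G → ℝ := fun g => if d1 1 g < 1 then d1 1 g else (L g : ℝ) with hwdef
  have h0 : ∀ g, 0 ≤ w g := by
    intro g
    by_cases hg : d1 1 g < 1
    · simp only [hwdef, if_pos hg]; exact hd10 1 g
    · simp only [hwdef, if_neg hg]; positivity
  have hwd : ∀ g : G, d1 1 g < 1 → w g = d1 1 g := fun g hg => if_pos hg
  have hwl : ∀ g : G, ¬ d1 1 g < 1 → w g = (L g : ℝ) := fun g hg => if_neg hg
  have hwl1 : ∀ g : G, ¬ d1 1 g < 1 → 1 ≤ w g := by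
    intro g hg
    rw [hwl g hg]
    have hgne : g ≠ 1 := by
      intro hcon
      rw [hcon, hd111] at hg
      exact hg one_pos
    exact_mod_cast hL1 g hgne
  have hwsym : ∀ g : G, w g⁻¹ = w g := by
    intro g
    simp only [hwdef, hd1sym1, hLinv]
  have hwconj : ∀ h g : G, w (h * g * h⁻¹) = w g := by
    intro h g
    simp only [hwdef, hd1conj, hLconj]
  -- key inequality
  have hKI : ∀ (m : ℕ) (l : List G), l.length ≤ m →
      (L l.prod : ℝ) ≤ 3 * (l.map w).sum + 1 := by
    intro m
    induction m with
    | zero =>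
      intro l hl
      have : l = [] := List.eq_nil_of_length_eq_zero (Nat.le_zero.mp hl)
      subst this
      have : L (1 : G) = 0 := by
        apply Nat.le_zero.mp
        apply hLle
        rw [show (1:G) ∈ E 0 ↔ (1:G) ∈ T 0 ^ 0 from Iff.rfl, pow_zero, Set.mem_one]
      simp [this]
    | succ m ih =>
      intro l hl
      rcases l with _ | ⟨s, t⟩
      · have : L (1 : G) = 0 := by
          apply Nat.le_zero.mp
          apply hLle
          rw [show (1:G) ∈ E 0 ↔ (1:G) ∈ T 0 ^ 0 from Iff.rfl, pow_zero, Set.mem_one]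
        simp [this]
      · have hsum_t0 : 0 ≤ (t.map w).sum := sum_map_nonneg h0 t
        by_cases hsd : d1 1 s < 1
        · -- d-branch head
          rcases t with _ | ⟨s', t'⟩
          · -- single element
            have h1 : L s ≤ 1 := hLball s hsd
            have h2 : 0 ≤ w s := h0 s
            simp only [List.prod_cons, List.prod_nil, mul_one, List.map_cons,
              List.map_nil, List.sum_cons, List.sum_nil, add_zero]
            have : (L s : ℝ) ≤ 1 := by exact_mod_cast h1
            linarith
          · by_cases hsd' : d1 1 s' < 1
            · by_cases hlt : w s + w s' < 1
              · -- merge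
                have hds : w s = d1 1 s := hwd s hsd
                have hds' : w s' = d1 1 s' := hwd s' hsd'
                have hdm : d1 1 (s * s') ≤ d1 1 s + d1 1 s' := d1_mul hd1 s s'
                have hmlt : d1 1 (s * s') < 1 := by
                  rw [hds, hds'] at hlt
                  have := hd10 1 s
                  have := hd10 1 s'
                  linarith
                have hwm : w (s * s') ≤ w s + w s' := by
                  rw [hwd _ hmlt, hds, hds']
                  exact hdm
                have hlen : ((s * s') :: t').length ≤ m := by
                  simp only [List.length_cons] at hl ⊢; omega
                have := ih ((s * s') :: t') hlen
                simp only [List.prod_cons, List.map_cons, List.sum_cons] at this ⊢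
                rw [← mul_assoc]
                linarith
              · -- two small with weight sum ≥ 1
                push_neg at hlt
                have hlen : t'.length ≤ m := by
                  simp only [List.length_cons] at hl; omega
                have hIH := ih t' hlen
                have hL1s : L s ≤ 1 := hLball s hsd
                have hL1s' : L s' ≤ 1 := hLball s' hsd'
                have hmul : (L (s * (s' * t'.prod)) : ℝ) ≤
                    (L s : ℝ) + (L s' : ℝ) + (L t'.prod : ℝ) := by
                  have k1 := hLmul s (s' * t'.prod)
                  have k2 := hLmul s' t'.prod
                  have : L (s * (s' * t'.prod)) ≤ L s + L s' + L t'.prod := by omega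
                  exact_mod_cast this
                simp only [List.prod_cons, List.map_cons, List.sum_cons] at hIH ⊢
                have c1 : (L s : ℝ) ≤ 1 := by exact_mod_cast hL1s
                have c2 : (L s' : ℝ) ≤ 1 := by exact_mod_cast hL1s'
                linarith
            · -- s small, s' an L-step
              have hws'1 : 1 ≤ w s' := hwl1 s' hsd'
              have hws'L : w s' = (L s' : ℝ) := hwl s' hsd'
              have hlen : t'.length ≤ m := by
                simp only [List.length_cons] at hl; omega
              have hIH := ih t' hlen
              have hL1s : L s ≤ 1 := hLball s hsd
              have hmul : (L (s * (s' * t'.prod)) : ℝ) ≤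
                  (L s : ℝ) + (L s' : ℝ) + (L t'.prod : ℝ) := by
                have k1 := hLmul s (s' * t'.prod)
                have k2 := hLmul s' t'.prod
                have : L (s * (s' * t'.prod)) ≤ L s + L s' + L t'.prod := by omega
                exact_mod_cast this
              simp only [List.prod_cons, List.map_cons, List.sum_cons] at hIH ⊢
              have c1 : (L s : ℝ) ≤ 1 := by exact_mod_cast hL1s
              have c3 : 0 ≤ w s := h0 s
              rw [← hws'L] at hmul
              linarith
        · -- head is an L-step
          have hwsL : w s = (L s : ℝ) := hwl s hsd
          have hlen : t.length ≤ m := by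
            simp only [List.length_cons] at hl; omega
          have hIH := ih t hlen
          have hmul : (L (s * t.prod) : ℝ) ≤ (L s : ℝ) + (L t.prod : ℝ) := by
            exact_mod_cast hLmul s t.prod
          simp only [List.prod_cons, List.map_cons, List.sum_cons] at hIH ⊢
          rw [← hwsL] at hmul
          have c3 : 0 ≤ w s := h0 s
          linarith
  -- lower bound for compatibility
  have hminle : ∀ g : G, min (d1 1 g) 1 ≤ wlen w g := by
    intro g
    apply le_wlen
    intro l hl
    by_cases hall : ∀ s ∈ l, w s < 1
    · have hle : ∀ s ∈ l, d1 1 s ≤ w s := by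
        intro s hs
        by_cases hsd : d1 1 s < 1
        · rw [hwd s hsd]
        · exfalso
          exact absurd (hall s hs) (not_lt.2 (hwl1 s hsd))
      have hsum : (l.map (fun s => d1 1 s)).sum ≤ (l.map w).sum :=
        List.sum_le_sum hle
      calc min (d1 1 g) 1 ≤ d1 1 g := min_le_left _ _
        _ = d1 1 l.prod := by rw [hl]
        _ ≤ (l.map (fun s => d1 1 s)).sum := d1_prod hd1 l
        _ ≤ (l.map w).sum := hsum
    · push_neg at hall
      obtain ⟨s, hs, hs1⟩ := hall
      calc min (d1 1 g) 1 ≤ 1 := min_le_right _ _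
        _ ≤ w s := hs1
        _ ≤ (l.map w).sum := List.single_le_sum (by
            intro x hx
            obtain ⟨y, hy, rfl⟩ := List.mem_map.1 hx
            exact h0 y) _ (List.mem_map_of_mem (f := w) hs)
  have hmet : IsCompatibleLeftInvariantMetric G (fun x y => wlen w (x⁻¹ * y)) := by
    apply build_metric w h0 hwsym
    · intro g hg
      have hpos : 0 < d1 1 g := by
        rcases lt_or_eq_of_le (hd10 1 g) with h | h
        · exact h
        · exact absurd (((hd1.1.1 1 g).1 h.symm).symm) hg
      calc (0:ℝ) < min (d1 1 g) 1 := lt_min hpos one_pos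
        _ ≤ wlen w g := hminle g
    · intro s hs
      obtain ⟨ε', hε', hsub⟩ := (hd1.2.1 1 s).1 hs
      refine ⟨min ε' 1, lt_min hε' one_pos, ?_⟩
      intro g hg
      simp only [Set.mem_setOf_eq] at hg
      have h1 := hminle g
      have h2 : min (d1 1 g) 1 < min ε' 1 := lt_of_le_of_lt h1 hg
      apply hsub
      show d1 1 g < ε'
      rcases le_or_gt 1 (d1 1 g) with h | h
      · exfalso
        rw [min_eq_right h] at h2
        have := min_le_right ε' 1
        linarith
      · rw [min_eq_left (le_of_lt h)] at h2
        exact lt_of_lt_of_le h2 (min_le_left _ _)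
    · intro ε' hε'
      have hc : (0:ℝ) < min ε' 1 := lt_min hε' one_pos
      apply Filter.mem_of_superset (dball_mem_nhds hd1 hc)
      intro g hg
      simp only [Set.mem_setOf_eq] at hg
      have hg1 : d1 1 g < 1 := lt_of_lt_of_le hg (min_le_right _ _)
      show wlen w g < ε'
      calc wlen w g ≤ w g := wlen_le_w h0 g
        _ = d1 1 g := hwd g hg1
        _ < ε' := lt_of_lt_of_le hg (min_le_left _ _)
  refine ⟨fun x y => wlen w (x⁻¹ * y), hmet,
    fun h g f => build_rightinv w h0 hwconj h g f, ?_⟩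
  rintro gs ⟨ρ, hρ, htends⟩
  have heq : ∀ n, wlen w ((gs n)⁻¹ * 1) = wlen w (gs n) := by
    intro n
    rw [mul_one, wlen_inv h0 hwsym]
  simp only [heq]
  rw [Filter.tendsto_atTop]
  intro b
  set k : ℕ := ⌈3 * b⌉₊ + 1 with hkdef
  have hkb : 3 * b + 1 ≤ (k : ℝ) := by
    have := Nat.le_ceil (3 * b)
    push_cast [hkdef]
    linarith
  obtain ⟨M, hM⟩ := hEOB k ρ hρ
  have hev : ∀ᶠ n in Filter.atTop, M < ρ (gs n) 1 := htends.eventually_gt_atTop M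
  filter_upwards [hev] with n hn
  have hnotEk : gs n ∉ E k := by
    intro hmem
    exact absurd (hM _ hmem 1 (h1E k)) (not_le.2 hn)
  have hLgt : k + 1 ≤ L (gs n) := by
    by_contra hc
    push_neg at hc
    have : L (gs n) ≤ k := by omega
    exact hnotEk (hEmono _ _ this (hLmem (gs n)))
  have hlow : ((L (gs n) : ℝ) - 1) / 3 ≤ wlen w (gs n) := by
    apply le_wlen
    intro l hl
    have := hKI l.length l le_rfl
    rw [hl] at this
    linarith
  have hcast : (k : ℝ) + 1 ≤ (L (gs n) : ℝ) := by exact_mod_cast hLgt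
  calc b ≤ ((k : ℝ) + 1 - 1) / 3 := by linarith
    _ ≤ ((L (gs n) : ℝ) - 1) / 3 := by linarith
    _ ≤ wlen w (gs n) := hlow

theorem forward_direction (d : G → G → ℝ) (hd : IsCompatibleLeftInvariantMetric G d)
    (hri : ∀ h g f : G, d (g * h) (f * h) = d g f) (hp : MetricallyProperMetric G d) :
    (∀ U ∈ nhds (1 : G), ∃ V ∈ nhds (1 : G), V ⊆ U ∧ ∀ g : G, ∀ a ∈ V, g * a * g⁻¹ ∈ V) ∧
      (∃ U ∈ nhds (1 : G), HasRelPropOB G U) ∧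
      (∀ A : Set G, HasRelPropOB G A → HasRelPropOB G (ConjClosure A)) := by
  have hdconj : ∀ h g : G, d 1 (h * g * h⁻¹) = d 1 g := by
    intro h g
    have h1 : d (1 * h) ((h * g * h⁻¹) * h) = d 1 (h * g * h⁻¹) := hri h 1 (h * g * h⁻¹)
    have h2 : (h * g * h⁻¹) * h = h * g := by group
    have h3 : d (h * 1) (h * g) = d 1 g := hd.2.2 h 1 g
    rw [h2] at h1
    rw [← h1, ← h3]
    norm_num
  have hinvmul : ∀ a b : G, d (a⁻¹ * b) 1 = d b a := by
    intro a b
    have h1 : d (a * (a⁻¹ * b)) (a * 1) = d (a⁻¹ * b) 1 := hd.2.2 a (a⁻¹ * b) 1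
    simpa [mul_assoc] using h1.symm
  have hnat : Filter.Tendsto (fun n : ℕ => (n : ℝ)) Filter.atTop Filter.atTop :=
    tendsto_natCast_atTop_atTop
  refine ⟨?_, ?_, ?_⟩
  · -- SIN
    intro Uu hUu
    obtain ⟨ε, hε, hsub⟩ := (hd.2.1 1 Uu).1 hUu
    refine ⟨{g : G | d 1 g < ε}, dball_mem_nhds hd hε, hsub, ?_⟩
    intro g a haV
    show d 1 (g * a * g⁻¹) < ε
    rw [hdconj g a]
    exact haV
  · -- local OB
    refine ⟨{g : G | d 1 g < 1}, dball_mem_nhds hd one_pos, ?_⟩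
    intro ρ hρ
    by_contra hnb
    rw [FiniteDiam] at hnb
    push_neg at hnb
    have hch : ∀ n : ℕ, ∃ p : G × G, p.1 ∈ {g : G | d 1 g < 1} ∧
        p.2 ∈ {g : G | d 1 g < 1} ∧ (n : ℝ) < ρ p.1 p.2 := by
      intro n
      obtain ⟨x, hx, y, hy, hxy⟩ := hnb n
      exact ⟨(x, y), hx, hy, hxy⟩
    choose p hp1 hp2 hp3 using hch
    set gs : ℕ → G := fun n => (p n).1⁻¹ * (p n).2 with hgsdef
    have hρinvmul : ∀ a b : G, ρ (a⁻¹ * b) 1 = ρ b a := by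
      intro a b
      have h1 : ρ (a * (a⁻¹ * b)) (a * 1) = ρ (a⁻¹ * b) 1 := hρ.2.2 a (a⁻¹ * b) 1
      simpa [mul_assoc] using h1.symm
    have hgt : ∀ n : ℕ, (n : ℝ) ≤ ρ (gs n) 1 := by
      intro n
      rw [hgsdef]
      dsimp only
      rw [hρinvmul]
      have := hρ.1.2.1 (p n).2 (p n).1
      have := hp3 n
      linarith
    have htinf : TendsToInfinity G gs :=
      ⟨ρ, hρ, Filter.tendsto_atTop_mono hgt hnat⟩
    have := hp gs htinf
    obtain ⟨n, hn⟩ := (this.eventually_ge_atTop 2).exists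
    have hb : d (gs n) 1 < 2 := by
      rw [hgsdef]
      dsimp only
      rw [hinvmul]
      have t1 := hd.1.2.2 (p n).2 1 (p n).1
      have t2 := hd.1.2.1 1 (p n).1
      have := hp1 n
      have := hp2 n
      have hs2 : d (p n).2 1 = d 1 (p n).2 := hd.1.2.1 _ _
      simp only [Set.mem_setOf_eq] at *
      linarith
    linarith
  · -- conjugacy closure preserves OB
    intro A hA ρ hρ
    rcases (ConjClosure A).eq_empty_or_nonempty with hE | ⟨z₀, hz₀⟩
    · rw [hE]
      exact ⟨0, by simp⟩
    · by_contra hnb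
      rw [FiniteDiam] at hnb
      push_neg at hnb
      have hzseq : ∀ n : ℕ, ∃ z, z ∈ ConjClosure A ∧ (n : ℝ) < ρ z 1 := by
        intro n
        obtain ⟨x, hx, y, hy, hxy⟩ := hnb (2 * n)
        have htri := hρ.1.2.2 x 1 y
        have hsym1 := hρ.1.2.1 x 1
        have hsym2 := hρ.1.2.1 y 1
        rcases le_or_gt (ρ x 1) n with h | h
        · refine ⟨y, hy, ?_⟩
          push_cast at hxy
          linarith
        · exact ⟨x, hx, h⟩
      choose z hz1 hz2 using hzseq
      have htinf : TendsToInfinity G z :=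
        ⟨ρ, hρ, Filter.tendsto_atTop_mono (fun n => le_of_lt (hz2 n)) hnat⟩
      have htd := hp z htinf
      obtain ⟨a₀, ha₀, g₀, hg₀⟩ := hz₀
      obtain ⟨CA, hCA⟩ := hA d hd
      have hb : ∀ n, d (z n) 1 ≤ d 1 a₀ + CA := by
        intro n
        obtain ⟨b, hb, h, hzn⟩ := hz1 n
        have h1 : d (z n) 1 = d 1 (z n) := hd.1.2.1 _ _
        have h2 : d 1 (z n) = d 1 b := by rw [hzn]; exact hdconj h b
        have h3 : d a₀ b ≤ CA := hCA a₀ ha₀ b hb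
        have h4 := hd.1.2.2 1 a₀ b
        linarith
      obtain ⟨n, hn⟩ := (htd.eventually_ge_atTop (d 1 a₀ + CA + 1)).exists
      have := hb n
      linarith

end Top
end OBP

theorem exists_metrically_proper_biinvariant_metric_iff {G : Type*} [Group G]
    [TopologicalSpace G] [IsTopologicalGroup G] [TopologicalSpace.MetrizableSpace G]
    [TopologicalSpace.SeparableSpace G] :
    (∃ d : G → G → ℝ, IsCompatibleLeftInvariantMetric G d ∧
        (∀ h g f : G, d (g * h) (f * h) = d g f) ∧ MetricallyProperMetric G d) ↔
      ((∀ U ∈ nhds (1 : G), ∃ V ∈ nhds (1 : G), V ⊆ U ∧ ∀ g : G, ∀ a ∈ V, g * a * g⁻¹ ∈ V) ∧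
        (∃ U ∈ nhds (1 : G), HasRelPropOB G U) ∧
        (∀ A : Set G, HasRelPropOB G A → HasRelPropOB G (ConjClosure A))) := by
  constructor
  · rintro ⟨d, hd, hri, hp⟩
    exact OBP.forward_direction d hd hri hp
  · rintro ⟨hsin, hloc, hconj⟩
    exact OBP.backward_direction hsin hloc hconj
end

section
/- Let G be a metrisable topological group and d a metrically proper compatible left-invariant metric on G. The following are equivalent: (1) for every compatible right-invariant metric ∂ on G, the identity map (G,d) → (G,∂) is bornologous; (2) whenever a subset A ⊆ G has property (OB) relative to G, so does its conjugation closure A^G = {gag⁻¹ : a ∈ A, g ∈ G}. -/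
open Filter Topology
open scoped Pointwise

lemma metric_nonneg' {G : Type*} {d : G → G → ℝ} (h : IsMetric d) (x y : G) : 0 ≤ d x y := by
  have h1 := h.2.2 x y x
  have h2 := (h.1 x x).2 rfl
  have h3 := h.2.1 y x
  linarith

/-- Pulling a compatible metric back along inversion yields a compatible metric. -/
lemma inv_compat' {G : Type*} [Group G] [TopologicalSpace G] [IsTopologicalGroup G]
    {e : G → G → ℝ} (he : IsCompatible G e) :
    IsCompatible G (fun x y => e x⁻¹ y⁻¹) := by
  intro x s
  constructor
  · intro hs
    have h1 : (Inv.inv ⁻¹' s : Set G) ∈ nhds x⁻¹ :=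
      (continuous_inv.continuousAt).preimage_mem_nhds (by simpa using hs)
    obtain ⟨ε, hε, hsub⟩ := (he x⁻¹ _).1 h1
    refine ⟨ε, hε, fun y hy => ?_⟩
    have : y⁻¹ ∈ (Inv.inv ⁻¹' s : Set G) := hsub (by simpa using hy)
    simpa using this
  · rintro ⟨ε, hε, hsub⟩
    have h1 : {z : G | e x⁻¹ z < ε} ⊆ (Inv.inv ⁻¹' s : Set G) := by
      intro z hz
      have : z⁻¹ ∈ s := hsub (by simpa using hz)
      simpa using this
    have h2 : (Inv.inv ⁻¹' s : Set G) ∈ nhds x⁻¹ := (he x⁻¹ _).2 ⟨ε, hε, h1⟩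
    have h3 := (continuous_inv.continuousAt (x := x)).preimage_mem_nhds h2
    simpa [Set.preimage_preimage] using h3

/-- Pulling a metric back along inversion yields a metric. -/
lemma inv_isMetric' {G : Type*} [Group G] {e : G → G → ℝ} (he : IsMetric e) :
    IsMetric (fun x y => e x⁻¹ y⁻¹) := by
  refine ⟨fun x y => ?_, fun x y => he.2.1 _ _, fun x y z => he.2.2 _ _ _⟩
  rw [he.1]
  exact inv_inj

/-- If `d` is metrically proper, closed `d`-balls around the identity have
property (OB) relative to `G`. -/
lemma ball_hasRelPropOB {G : Type*} [Group G] [TopologicalSpace G]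
    (d : G → G → ℝ) (hd : IsCompatibleLeftInvariantMetric G d)
    (hproper : MetricallyProperMetric G d) (R : ℝ) :
    HasRelPropOB G {a : G | d a 1 ≤ R} := by
  intro e he
  by_contra hcon
  unfold FiniteDiam at hcon
  push_neg at hcon
  choose x hx y hy hgt using fun n : ℕ => hcon n
  set a : ℕ → G := fun n => (x n)⁻¹ * y n with ha
  have key : ∀ n, e (a n) 1 = e (x n) (y n) := by
    intro n
    have := he.2.2 (x n) (a n) 1
    simp only [ha, mul_one, mul_inv_cancel_left] at this
    rw [← this, he.1.2.1]
  have keyd : ∀ n, d (a n) 1 ≤ 2 * R := by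
    intro n
    have h1 : d (a n) 1 = d (y n) (x n) := by
      have := hd.2.2 (x n) (a n) 1
      simp only [ha, mul_one, mul_inv_cancel_left] at this
      rw [← this]
    have h2 := hd.1.2.2 (y n) 1 (x n)
    have h3 : d 1 (x n) = d (x n) 1 := hd.1.2.1 1 (x n)
    have h4 : d (y n) 1 ≤ R := hy n
    have h5 : d (x n) 1 ≤ R := hx n
    linarith
  have hinf : TendsToInfinity G a := by
    refine ⟨e, he, ?_⟩
    refine tendsto_atTop_mono (fun n => ?_) tendsto_natCast_atTop_atTop
    rw [key n]
    exact (hgt n).le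
  have := (hproper a hinf).eventually_ge_atTop (2 * R + 1)
  obtain ⟨n, hn⟩ := this.exists
  have := keyd n
  linarith

theorem left_to_right_bornologous_iff_conj_closure_OB {G : Type*} [Group G]
    [TopologicalSpace G] [IsTopologicalGroup G] [TopologicalSpace.MetrizableSpace G]
    (d : G → G → ℝ) (hd : IsCompatibleLeftInvariantMetric G d)
    (hproper : MetricallyProperMetric G d) :
    (∀ e : G → G → ℝ,
        (IsMetric e ∧ IsCompatible G e ∧ ∀ h g f : G, e (g * h) (f * h) = e g f) →
        ∀ R > (0 : ℝ), ∃ S > (0 : ℝ), ∀ x y : G, d x y ≤ R → e x y ≤ S) ↔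
      (∀ A : Set G, HasRelPropOB G A → HasRelPropOB G (ConjClosure A)) := by
  constructor
  · -- (1) ⇒ (2)
    intro hborn A hA e' he'
    rcases A.eq_empty_or_nonempty with hAe | ⟨a₀, ha₀⟩
    · refine ⟨0, ?_⟩
      rintro x ⟨a, haA, -⟩
      rw [hAe] at haA
      exact absurd haA (Set.notMem_empty a)
    -- d-bound on A
    obtain ⟨CA, hCA⟩ := hA d hd
    set R : ℝ := CA + d a₀ 1 + 1 with hR
    have hRpos : 0 < R := by
      have h1 : 0 ≤ CA := le_trans (metric_nonneg' hd.1 a₀ a₀) (hCA a₀ ha₀ a₀ ha₀)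
      have h2 := metric_nonneg' hd.1 a₀ (1 : G)
      simp only [hR]; linarith
    -- the right-invariant companion of e'
    set E : G → G → ℝ := fun x y => e' x⁻¹ y⁻¹ with hE
    have hErt : ∀ h g f : G, E (g * h) (f * h) = E g f := by
      intro h g f
      simp only [hE, mul_inv_rev]
      exact he'.2.2 h⁻¹ g⁻¹ f⁻¹
    obtain ⟨S, hSpos, hS⟩ := hborn E ⟨inv_isMetric' he'.1, inv_compat' he'.2.1, hErt⟩ R hRpos
    -- every conjugate is within S of 1 in e'
    have central : ∀ c ∈ ConjClosure A, e' c 1 ≤ S := by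
      rintro c ⟨a, haA, g, rfl⟩
      have hd1 : d (g * a⁻¹) g ≤ R := by
        have h1 : d (g * a⁻¹) (g * 1) = d a⁻¹ 1 := hd.2.2 g a⁻¹ 1
        have h2 : d (a * a⁻¹) (a * 1) = d a⁻¹ 1 := hd.2.2 a a⁻¹ 1
        have h3 : d a 1 ≤ CA + d a₀ 1 := by
          have := hd.1.2.2 a a₀ 1
          have := hCA a haA a₀ ha₀
          linarith [hd.1.2.2 a a₀ 1, hCA a haA a₀ ha₀]
        have h4 : d 1 a = d a 1 := hd.1.2.1 1 a
        simp only [mul_one, mul_inv_cancel] at h1 h2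
        rw [h1]
        rw [← h2]  -- d a⁻¹ 1 = d 1 a
        simp only [hR]; linarith
      have hE1 := hS _ _ hd1
      have : E (g * a⁻¹) g = e' (g * a * g⁻¹) 1 := by
        simp only [hE, mul_inv_rev, inv_inv]
        have := he'.2.2 g (a * g⁻¹) g⁻¹
        rw [← mul_assoc] at this
        simpa using this.symm
      rw [this] at hE1
      exact hE1
    refine ⟨2 * S, fun x hx y hy => ?_⟩
    have h1 := he'.1.2.2 x 1 y
    have h2 : e' 1 y = e' y 1 := he'.1.2.1 1 y
    have := central x hx
    have := central y hy
    linarith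
  · -- (2) ⇒ (1)
    intro hOB e he R hRpos
    set A : Set G := {a : G | d a 1 ≤ R} with hA
    have hAOB : HasRelPropOB G A := ball_hasRelPropOB d hd hproper R
    -- the left-invariant companion of e
    set E : G → G → ℝ := fun x y => e x⁻¹ y⁻¹ with hE
    have hElt : ∀ h g f : G, E (h * g) (h * f) = E g f := by
      intro h g f
      simp only [hE, mul_inv_rev]
      exact he.2.2 h⁻¹ g⁻¹ f⁻¹
    obtain ⟨C, hC⟩ := hOB A hAOB E ⟨inv_isMetric' he.1, inv_compat' he.2.1, hElt⟩
    refine ⟨max C 1, lt_of_lt_of_le one_pos (le_max_right C 1), fun x y hxy => ?_⟩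
    -- a := x⁻¹ y ∈ A, c := x a x⁻¹ ∈ A^G, c⁻¹ ∈ A^G, 1 ∈ A^G
    set a : G := x⁻¹ * y with haa
    have haA : a ∈ A := by
      simp only [hA, Set.mem_setOf_eq]
      have h1 : d (x * a) (x * 1) = d a 1 := hd.2.2 x a 1
      rw [haa, mul_one, mul_inv_cancel_left] at h1
      rw [← h1, hd.1.2.1]
      exact hxy
    have hmem1 : (1 : G) ∈ ConjClosure A := by
      refine ⟨1, ?_, 1, by group⟩
      simp only [hA, Set.mem_setOf_eq]
      have := (hd.1.1 (1 : G) 1).2 rfl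
      linarith
    have hmemc : x * a⁻¹ * x⁻¹ ∈ ConjClosure A := by
      refine ⟨a⁻¹, ?_, x, rfl⟩
      simp only [hA, Set.mem_setOf_eq] at haA ⊢
      have h2 : d (a * a⁻¹) (a * 1) = d a⁻¹ 1 := hd.2.2 a a⁻¹ 1
      simp only [mul_one, mul_inv_cancel] at h2
      have h3 : d 1 a = d a 1 := hd.1.2.1 1 a
      linarith [h2, h3, haA]
    have hcalc : E 1 (x * a⁻¹ * x⁻¹) = e x y := by
      show e (1:G)⁻¹ (x * a⁻¹ * x⁻¹)⁻¹ = e x y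
      have h1 : e (1 * x) ((x * a * x⁻¹) * x) = e 1 (x * a * x⁻¹) := he.2.2 x 1 (x * a * x⁻¹)
      have h2 : (x * a⁻¹ * x⁻¹)⁻¹ = x * a * x⁻¹ := by group
      have hx2 : (x * a * x⁻¹) * x = y := by rw [haa]; group
      rw [inv_one, h2, ← h1, one_mul, hx2]
    have := hC 1 hmem1 (x * a⁻¹ * x⁻¹) hmemc
    rw [hcalc] at this
    exact le_trans this (le_max_left C 1)
end

section
/- Suppose d is a compatible left-invariant metric on a topological group G such that some ball B_ε = {g ∈ G : d(g,1) ≤ ε} generates G. Define ∂(f,h) = inf{ Σ_{i=1}^n d(g_i,1) : g_i ∈ B_ε and f = h g_1 ⋯ g_n }. Then ∂ is a compatible left-invariant metric on G which is quasi-isometric to the word metric ρ_{B_ε}; in fact (ε/4)·ρ_{B_ε}(f,h) − (1 + ε/4) ≤ ∂(f,h) ≤ ε·ρ_{B_ε}(f,h) for all f,h ∈ G. -/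
open Filter Topology
open scoped Pointwise

/-- The word metric (with values in `ℝ`) associated to a symmetric generating set `S`. -/
noncomputable def wordMetric {G : Type*} [Group G] (S : Set G) (f h : G) : ℝ :=
  sInf {r : ℝ | ∃ l : List G, (∀ x ∈ l, x ∈ S) ∧ f = h * l.prod ∧ r = l.length}

/-- `∂(f,h) = inf { Σ d(gᵢ,1) : gᵢ ∈ B_ε, f = h g₁ ⋯ gₙ }`. -/
noncomputable def weightedWordMetric {G : Type*} [Group G] (d : G → G → ℝ) (ε : ℝ)
    (f h : G) : ℝ :=
  sInf {r : ℝ | ∃ l : List G, (∀ x ∈ l, d x 1 ≤ ε) ∧ f = h * l.prod ∧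
    r = (l.map fun g => d g 1).sum}




section Aux
variable {G : Type*} [Group G] (d : G → G → ℝ) (ε : ℝ)

noncomputable def wwt (l : List G) : ℝ := (l.map fun g => d g 1).sum

variable {d}
variable (hzero : ∀ x y : G, d x y = 0 ↔ x = y) (hsymm : ∀ x y : G, d x y = d y x)
  (htri : ∀ x y z : G, d x z ≤ d x y + d y z)
  (hli : ∀ h g f : G, d (h * g) (h * f) = d g f)

set_option linter.unusedSectionVars false

include hzero hsymm htri in
lemma wd_nonneg (x y : G) : 0 ≤ d x y := by
  have h1 := htri x y x
  have h2 := hsymm x y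
  have h3 := (hzero x x).2 rfl
  linarith

include hli hsymm in
lemma wd_inv (x : G) : d x⁻¹ 1 = d x 1 := by
  have := hli x x⁻¹ 1
  simp at this
  rw [← this, hsymm]

include hzero hsymm htri in
lemma wwt_nonneg (l : List G) : 0 ≤ wwt d l := by
  apply List.sum_nonneg
  intro x hx
  simp only [List.mem_map] at hx
  obtain ⟨a, -, rfl⟩ := hx
  exact wd_nonneg hzero hsymm htri a 1

include hzero htri hli in
lemma wd_le_wwt (h : G) (l : List G) : d (h * l.prod) h ≤ wwt d l := by
  induction l generalizing h with
  | nil => simp [wwt, ((hzero h h).2 rfl).le]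
  | cons a t ih =>
    have h1 := htri (h * (a :: t).prod) (h * a) h
    have h2 : d (h * (a :: t).prod) (h * a) = d ((h * a) * t.prod) (h * a) := by
      simp [mul_assoc]
    have h3 : d (h * a) h = d a 1 := by
      have := hli h a 1; simpa using this
    have := ih (h * a)
    simp only [wwt, List.map_cons, List.sum_cons]
    rw [h2] at h1
    simp only [wwt] at this
    linarith

include hsymm hli in
lemma exists_wlist (hgen : Subgroup.closure {g : G | d g 1 ≤ ε} = ⊤) (f h : G) :
    ∃ l : List G, (∀ x ∈ l, d x 1 ≤ ε) ∧ f = h * l.prod := by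
  have hx : h⁻¹ * f ∈ (Subgroup.closure {g : G | d g 1 ≤ ε}).toSubmonoid := by
    rw [hgen]; trivial
  rw [Subgroup.closure_toSubmonoid] at hx
  obtain ⟨l, hl, hprod⟩ := Submonoid.exists_list_of_mem_closure hx
  refine ⟨l, fun x hx' => ?_, by rw [hprod]; group⟩
  rcases hl x hx' with h1 | h1
  · exact h1
  · have : d x⁻¹ 1 ≤ ε := h1
    rwa [wd_inv hsymm hli] at this

end Aux

section Aux2
variable {G : Type*} [Group G] {d : G → G → ℝ} {ε : ℝ}
variable (hzero : ∀ x y : G, d x y = 0 ↔ x = y) (hsymm : ∀ x y : G, d x y = d y x)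
  (htri : ∀ x y z : G, d x z ≤ d x y + d y z)
  (hli : ∀ h g f : G, d (h * g) (h * f) = d g f)

set_option linter.unusedSectionVars false

include hzero hsymm htri hli in
lemma wreduce : ∀ n (l : List G), l.length ≤ n → (∀ x ∈ l, d x 1 ≤ ε) →
    ∃ l' : List G, (∀ x ∈ l', d x 1 ≤ ε) ∧ l'.prod = l.prod ∧ wwt d l' ≤ wwt d l ∧
      l'.length ≤ l.length ∧ l'.Chain' (fun a b => ε < d a 1 + d b 1) := by
  intro n
  induction n with
  | zero =>
    intro l hl _
    have : l = [] := List.length_eq_zero_iff.mp (Nat.le_zero.mp hl)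
    subst this
    exact ⟨[], by simp, rfl, le_refl _, le_refl _, List.isChain_nil⟩
  | succ n ih =>
    intro l hl hB
    match l with
    | [] => exact ⟨[], by simp, rfl, le_refl _, le_refl _, List.isChain_nil⟩
    | a :: t =>
      obtain ⟨t', hB', hprod', hwt', hlen', hchain'⟩ :=
        ih t (by simpa using Nat.succ_le_succ_iff.mp hl)
          (fun x hx => hB x (List.mem_cons_of_mem _ hx))
      have hda : 0 ≤ d a 1 := wd_nonneg hzero hsymm htri a 1
      have hwtnn : 0 ≤ wwt d t := wwt_nonneg hzero hsymm htri t
      match t' with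
      | [] =>
        refine ⟨[a], fun x hx => ?_, ?_, ?_, by simp, List.isChain_singleton a⟩
        · rw [List.mem_singleton.mp hx]
          exact hB a (List.mem_cons_self)
        · simp only [List.prod_cons, List.prod_nil] at hprod' ⊢
          rw [← hprod', mul_one]
        · simp only [wwt, List.map_cons, List.map_nil, List.sum_cons, List.sum_nil] at hwt' ⊢
          linarith
      | b :: t'' =>
        by_cases hab : d a 1 + d b 1 ≤ ε
        · -- combine a and b
          have hdb : 0 ≤ d b 1 := wd_nonneg hzero hsymm htri b 1
          have habB : d (a * b) 1 ≤ ε := by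
            have h1 := htri (a * b) a 1
            have h2 : d (a * b) a = d b 1 := by have := hli a b 1; simpa using this
            linarith
          have habwt : d (a * b) 1 ≤ d a 1 + d b 1 := by
            have h1 := htri (a * b) a 1
            have h2 : d (a * b) a = d b 1 := by have := hli a b 1; simpa using this
            linarith
          obtain ⟨l₂, hB₂, hprod₂, hwt₂, hlen₂, hchain₂⟩ :=
            ih ((a * b) :: t'')
              (by
                simp only [List.length_cons] at hlen' hl ⊢
                omega)
              (by
                intro x hx
                rcases List.mem_cons.mp hx with rfl | hx
                · exact habB
                · exact hB' x (List.mem_cons_of_mem _ hx))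
          refine ⟨l₂, hB₂, ?_, ?_, ?_, hchain₂⟩
          · rw [hprod₂]
            simp only [List.prod_cons] at hprod' ⊢
            rw [mul_assoc, hprod']
          · simp only [wwt, List.map_cons, List.sum_cons] at hwt₂ hwt' ⊢
            simp only [wwt] at *
            linarith
          · simp only [List.length_cons] at hlen₂ hlen' hl ⊢
            omega
        · -- keep a
          refine ⟨a :: b :: t'', fun x hx => ?_, ?_, ?_, ?_, ?_⟩
          · rcases List.mem_cons.mp hx with h | hx
            · rw [h]; exact hB a (List.mem_cons_self)
            · exact hB' x hx
          · simp only [List.prod_cons] at hprod' ⊢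
            rw [hprod']
          · simp only [wwt, List.map_cons, List.sum_cons] at hwt' ⊢
            linarith
          · simp only [List.length_cons] at hlen' ⊢
            omega
          · exact List.isChain_cons_cons.mpr ⟨not_le.mp hab, hchain'⟩

include hzero hsymm htri in
lemma wchain_bound : ∀ (t : List G) (a : G),
    (a :: t).Chain' (fun a b => ε < d a 1 + d b 1) →
    ε * t.length ≤ wwt d (a :: t) + wwt d t := by
  intro t
  induction t with
  | nil =>
    intro a _
    have := wd_nonneg hzero hsymm htri a 1
    simp [wwt]
    linarith
  | cons b t' ih =>
    intro a hch
    have h1 : ε < d a 1 + d b 1 := (List.isChain_cons_cons.mp hch).1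
    have h2 := ih b (List.isChain_cons_cons.mp hch).2
    simp only [wwt, List.map_cons, List.sum_cons, List.length_cons] at h2 ⊢
    push_cast
    linarith

end Aux2

theorem weighted_word_metric_compatible_and_QI_to_word_metric {G : Type*} [Group G]
    [TopologicalSpace G] (d : G → G → ℝ) (hd : IsCompatibleLeftInvariantMetric G d)
    (ε : ℝ) (hε : 0 < ε) (hgen : Subgroup.closure {g : G | d g 1 ≤ ε} = ⊤) :
    IsCompatibleLeftInvariantMetric G (weightedWordMetric d ε) ∧
      ∀ f h : G,
        ε / 4 * wordMetric {g : G | d g 1 ≤ ε} f h - (1 + ε / 4) ≤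
            weightedWordMetric d ε f h ∧
          weightedWordMetric d ε f h ≤ ε * wordMetric {g : G | d g 1 ≤ ε} f h := by
  obtain ⟨⟨hzero, hsymm, htri⟩, hcomp, hli⟩ := hd
  -- the defining sets
  set S : G → G → Set ℝ := fun f h =>
    {r : ℝ | ∃ l : List G, (∀ x ∈ l, d x 1 ≤ ε) ∧ f = h * l.prod ∧
      r = (l.map fun g => d g 1).sum} with hSdef
  set W : G → G → Set ℝ := fun f h =>
    {r : ℝ | ∃ l : List G, (∀ x ∈ l, x ∈ {g : G | d g 1 ≤ ε}) ∧ f = h * l.prod ∧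
      r = l.length} with hWdef
  have hwwm : ∀ f h : G, weightedWordMetric d ε f h = sInf (S f h) := fun _ _ => rfl
  have hwm : ∀ f h : G, wordMetric {g : G | d g 1 ≤ ε} f h = sInf (W f h) := fun _ _ => rfl
  have hSmem : ∀ (f h : G) (l : List G), (∀ x ∈ l, d x 1 ≤ ε) → f = h * l.prod →
      wwt d l ∈ S f h := fun f h l h1 h2 => ⟨l, h1, h2, rfl⟩
  have hSne : ∀ f h : G, (S f h).Nonempty := by
    intro f h
    obtain ⟨l, h1, h2⟩ := exists_wlist ε hsymm hli hgen f h
    exact ⟨_, hSmem f h l h1 h2⟩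
  have hSbdd : ∀ f h : G, BddBelow (S f h) := by
    rintro f h
    refine ⟨0, ?_⟩
    rintro r ⟨l, h1, h2, rfl⟩
    exact wwt_nonneg hzero hsymm htri l
  have hWne : ∀ f h : G, (W f h).Nonempty := by
    intro f h
    obtain ⟨l, h1, h2⟩ := exists_wlist ε hsymm hli hgen f h
    exact ⟨_, l, h1, h2, rfl⟩
  have hWbdd : ∀ f h : G, BddBelow (W f h) := by
    rintro f h
    refine ⟨0, ?_⟩
    rintro r ⟨l, h1, h2, rfl⟩
    positivity
  -- d ≤ ∂
  have hA : ∀ f h : G, d f h ≤ weightedWordMetric d ε f h := by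
    intro f h
    rw [hwwm]
    refine le_csInf (hSne f h) ?_
    rintro r ⟨l, h1, h2, rfl⟩
    rw [h2]
    exact wd_le_wwt hzero htri hli h l
  -- ∂ ≤ d when d ≤ ε
  have hB : ∀ f h : G, d f h ≤ ε → weightedWordMetric d ε f h ≤ d f h := by
    intro f h hfh
    rw [hwwm]
    have hmem : d f h ∈ S f h := by
      refine ⟨[h⁻¹ * f], ?_, by simp, ?_⟩
      · intro x hx
        rw [List.mem_singleton.mp hx]
        have h1 : d (h * (h⁻¹ * f)) (h * 1) = d (h⁻¹ * f) 1 := hli h _ 1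
        simp only [mul_inv_cancel_left, mul_one] at h1
        rw [← h1]; exact hfh
      · have h1 : d (h * (h⁻¹ * f)) (h * 1) = d (h⁻¹ * f) 1 := hli h _ 1
        simp only [mul_inv_cancel_left, mul_one] at h1
        simp [← h1]
    exact csInf_le (hSbdd f h) hmem
  have hDnonneg : ∀ f h : G, 0 ≤ weightedWordMetric d ε f h := by
    intro f h
    rw [hwwm]
    refine le_csInf (hSne f h) ?_
    rintro r ⟨l, h1, h2, rfl⟩
    exact wwt_nonneg hzero hsymm htri l
  have hDself : ∀ x : G, weightedWordMetric d ε x x = 0 := by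
    intro x
    refine le_antisymm ?_ (hDnonneg x x)
    rw [hwwm]
    refine csInf_le (hSbdd x x) ⟨[], by simp, by simp, by simp⟩
  -- symmetry
  have hSsub : ∀ f h : G, S f h ⊆ S h f := by
    rintro f h r ⟨l, h1, h2, rfl⟩
    refine ⟨(l.map fun x => x⁻¹).reverse, ?_, ?_, ?_⟩
    · intro x hx
      simp only [List.mem_reverse, List.mem_map] at hx
      obtain ⟨a, ha, rfl⟩ := hx
      rw [wd_inv hsymm hli]
      exact h1 a ha
    · rw [h2, ← List.prod_inv_reverse]
      group
    · rw [List.map_reverse, List.sum_reverse, List.map_map]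
      exact congrArg List.sum (List.map_congr_left fun x _ =>
        (wd_inv hsymm hli x).symm)
  have hDsymm : ∀ f h : G, weightedWordMetric d ε f h = weightedWordMetric d ε h f := by
    intro f h
    rw [hwwm, hwwm]
    exact le_antisymm (csInf_le_csInf (hSbdd f h) (hSne h f) (hSsub h f))
      (csInf_le_csInf (hSbdd h f) (hSne f h) (hSsub f h))
  -- triangle
  have hDtri : ∀ x y z : G, weightedWordMetric d ε x z ≤
      weightedWordMetric d ε x y + weightedWordMetric d ε y z := by
    intro x y z
    have key : ∀ a ∈ S x y, ∀ b ∈ S y z, weightedWordMetric d ε x z ≤ a + b := by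
      rintro a ⟨l1, h11, h12, rfl⟩ b ⟨l2, h21, h22, rfl⟩
      rw [hwwm]
      have hmem : ((l1.map fun g => d g 1).sum + (l2.map fun g => d g 1).sum) ∈ S x z := by
        refine ⟨l2 ++ l1, ?_, ?_, ?_⟩
        · intro g hg
          rcases List.mem_append.mp hg with hg | hg
          · exact h21 g hg
          · exact h11 g hg
        · rw [List.prod_append, h12, h22, mul_assoc]
        · rw [List.map_append, List.sum_append]; ring
      exact csInf_le (hSbdd x z) hmem
    have step1 : ∀ a ∈ S x y, weightedWordMetric d ε x z - a ≤ weightedWordMetric d ε y z := by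
      intro a ha
      rw [hwwm y z]
      refine le_csInf (hSne y z) ?_
      intro b hb
      linarith [key a ha b hb]
    have step2 : weightedWordMetric d ε x z - weightedWordMetric d ε y z ≤
        weightedWordMetric d ε x y := by
      rw [hwwm x y]
      refine le_csInf (hSne x y) ?_
      intro a ha
      linarith [step1 a ha]
    linarith
  -- left invariance
  have hDli : ∀ k g f : G, weightedWordMetric d ε (k * g) (k * f) =
      weightedWordMetric d ε g f := by
    intro k g f
    unfold weightedWordMetric
    congr 1
    ext r
    simp only [Set.mem_setOf_eq, mul_assoc, mul_right_inj]
  refine ⟨⟨⟨?_, fun x y => hDsymm x y, hDtri⟩, ?_, hDli⟩, ?_⟩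
  · -- eq-zero axiom
    intro x y
    constructor
    · intro h0
      refine (hzero x y).1 (le_antisymm ?_ (wd_nonneg hzero hsymm htri x y))
      rw [← h0]; exact hA x y
    · rintro rfl; exact hDself x
  · -- compatibility
    intro x s
    rw [hcomp x s]
    constructor
    · rintro ⟨δ, hδ, hsub⟩
      exact ⟨δ, hδ, fun y hy => hsub (lt_of_le_of_lt (hA x y) hy)⟩
    · rintro ⟨δ, hδ, hsub⟩
      refine ⟨min δ ε, lt_min hδ hε, fun y hy => hsub ?_⟩
      simp only [Set.mem_setOf_eq] at hy ⊢
      have h1 : d x y ≤ ε := le_of_lt (lt_of_lt_of_le hy (min_le_right δ ε))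
      exact lt_of_le_of_lt (hB x y h1) (lt_of_lt_of_le hy (min_le_left δ ε))
  · -- quasi-isometry bounds
    intro f h
    constructor
    · -- lower bound
      rw [hwwm]
      refine le_csInf (hSne f h) ?_
      rintro r ⟨l, hBl, hfh, rfl⟩
      obtain ⟨l', hB', hprod', hwt', hlen', hchain'⟩ :=
        wreduce hzero hsymm htri hli l.length l le_rfl hBl
      have hwtl : (0:ℝ) ≤ (l.map fun g => d g 1).sum := wwt_nonneg hzero hsymm htri l
      have hρmem : (l'.length : ℝ) ∈ W f h :=
        ⟨l', hB', by rw [hfh, hprod'], rfl⟩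
      have hρle : wordMetric {g : G | d g 1 ≤ ε} f h ≤ l'.length :=
        hwm f h ▸ csInf_le (hWbdd f h) hρmem
      match l' with
      | [] =>
        simp only [List.length_nil, Nat.cast_zero] at hρle
        nlinarith [hρle, hwtl, hε]
      | a :: t =>
        have hcb := wchain_bound hzero hsymm htri t a hchain'
        have hda : 0 ≤ d a 1 := wd_nonneg hzero hsymm htri a 1
        have hwtt : wwt d t ≤ wwt d (a :: t) := by
          simp only [wwt, List.map_cons, List.sum_cons]; linarith
        have hwt2 : ε * t.length ≤ 2 * (l.map fun g => d g 1).sum := by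
          have : wwt d (a :: t) ≤ (l.map fun g => d g 1).sum := hwt'
          linarith
        have hlen : ((a :: t).length : ℝ) = (t.length : ℝ) + 1 := by push_cast [List.length_cons]; ring
        have hρ2 : ε * wordMetric {g : G | d g 1 ≤ ε} f h ≤ ε * ((t.length : ℝ) + 1) := by
          apply mul_le_mul_of_nonneg_left _ (le_of_lt hε)
          rw [← hlen]; exact hρle
        linarith
    · -- upper bound
      have key : ∀ r ∈ W f h, weightedWordMetric d ε f h ≤ ε * r := by
        rintro r ⟨l, h1, h2, rfl⟩
        have step : weightedWordMetric d ε f h ≤ (l.map fun g => d g 1).sum := by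
          rw [hwwm]; exact csInf_le (hSbdd f h) ⟨l, h1, h2, rfl⟩
        have step2 : (l.map fun g => d g 1).sum ≤ (l.length : ℝ) * ε := by
          have := List.sum_le_card_nsmul (l.map fun g => d g 1) ε ?_
          · simpa [nsmul_eq_mul] using this
          · intro x hx
            simp only [List.mem_map] at hx
            obtain ⟨a, ha, rfl⟩ := hx
            exact h1 a ha
        calc weightedWordMetric d ε f h ≤ (l.length : ℝ) * ε := le_trans step step2
          _ = ε * (l.length : ℝ) := mul_comm _ _
      have hdiv : weightedWordMetric d ε f h / ε ≤ wordMetric {g : G | d g 1 ≤ ε} f h := by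
        rw [hwm]
        refine le_csInf (hWne f h) ?_
        intro r hr
        rw [div_le_iff₀ hε]
        calc weightedWordMetric d ε f h ≤ ε * r := key r hr
          _ = r * ε := mul_comm _ _
      calc weightedWordMetric d ε f h = weightedWordMetric d ε f h / ε * ε := by
            field_simp
        _ ≤ wordMetric {g : G | d g 1 ≤ ε} f h * ε :=
            mul_le_mul_of_nonneg_right hdiv (le_of_lt hε)
        _ = ε * wordMetric {g : G | d g 1 ≤ ε} f h := mul_comm _ _
end

section
/- If F: (X,d_X) → (Y,d_Y) is a bornologous map from a large scale geodesic metric space (X,d_X) to a metric space (Y,d_Y), then F is Lipschitz for large distances, i.e., there is a constant K ≥ 1 so that d_Y(Fx,Fx') ≤ K·d_X(x,x') whenever d_X(x,x') ≥ K. -/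
open Filter Topology

private lemma chain_bound {X Y : Type*} [MetricSpace X] [MetricSpace Y]
    (F : X → Y) (K S : ℝ) (hK : 1 ≤ K) (hS : 0 < S)
    (hb : ∀ a b : X, dist a b ≤ 2 * K → dist (F a) (F b) ≤ S) :
    ∀ n : ℕ, ∀ z : ℕ → X, (∀ i < n, dist (z i) (z (i + 1)) ≤ K) →
      dist (F (z 0)) (F (z n)) ≤
        S * ((∑ i ∈ Finset.range n, dist (z i) (z (i + 1))) / K + 1) := by
  classical
  have hK0 : (0 : ℝ) < K := lt_of_lt_of_le one_pos hK
  intro n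
  induction n using Nat.strong_induction_on with
  | _ n ih =>
    intro z hz
    set s : ℕ → ℝ := fun j => ∑ i ∈ Finset.range j, dist (z i) (z (i + 1)) with hs
    have hsnonneg : ∀ j, 0 ≤ s j := fun j =>
      Finset.sum_nonneg fun i _ => dist_nonneg
    by_cases hcase : ∃ j, j ≤ n ∧ K < s j
    · -- find minimal such j
      have hex : ∃ j, K < s j := ⟨hcase.choose, hcase.choose_spec.2⟩
      set j := Nat.find hex with hj
      have hjK : K < s j := Nat.find_spec hex
      have hjmin : ∀ i < j, s i ≤ K := fun i hi => le_of_not_gt (Nat.find_min hex hi)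
      have hjle : j ≤ n := Nat.find_le hcase.choose_spec.2 |>.trans hcase.choose_spec.1 |> id
      have hjle' : j ≤ n := by
        rcases hcase with ⟨j0, hj0n, hj0⟩
        exact le_trans (Nat.find_le hj0) hj0n
      have hj1 : 1 ≤ j := by
        by_contra h
        push_neg at h
        interval_cases j
        · simp [hs] at hjK; linarith
      -- s j ≤ 2K
      have hsj2K : s j ≤ 2 * K := by
        obtain ⟨j', hj'⟩ : ∃ j', j = j' + 1 := ⟨j - 1, by omega⟩
        have h1 : s j' ≤ K := hjmin j' (by omega)
        have h2 : dist (z j') (z (j' + 1)) ≤ K := hz j' (by omega)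
        have h3 : s (j' + 1) = s j' + dist (z j') (z (j' + 1)) := by
          simp [hs, Finset.sum_range_succ]
        rw [hj']
        linarith
      have hd0j : dist (z 0) (z j) ≤ 2 * K :=
        le_trans (dist_le_range_sum_dist z j) hsj2K
      have hF0j : dist (F (z 0)) (F (z j)) ≤ S := hb _ _ hd0j
      -- tail chain
      set m := n - j with hm
      have hnm : n = j + m := by omega
      set z' : ℕ → X := fun i => z (j + i) with hz'
      have hz'steps : ∀ i < m, dist (z' i) (z' (i + 1)) ≤ K := by
        intro i hi
        have := hz (j + i) (by omega)
        simpa [hz', Nat.add_assoc] using this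
      have hmlt : m < n := by omega
      have htail := ih m hmlt z' hz'steps
      have hz'0 : z' 0 = z j := by simp [hz']
      have hz'm : z' m = z n := by simp only [hz']; congr 1; omega
      -- sum split
      have hsplit : s n = s j + ∑ i ∈ Finset.range m, dist (z' i) (z' (i + 1)) := by
        rw [hs]
        simp only [hz']
        rw [hnm, Finset.sum_range_add]
        congr 1
      have hL' : (∑ i ∈ Finset.range m, dist (z' i) (z' (i + 1))) ≤ s n - K := by
        have := hsplit
        linarith
      have htail' : dist (F (z j)) (F (z n)) ≤ S * ((s n - K) / K + 1) := by
        rw [← hz'0, ← hz'm]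
        refine le_trans htail ?_
        have hdiv : (∑ i ∈ Finset.range m, dist (z' i) (z' (i + 1))) / K ≤ (s n - K) / K :=
          div_le_div_of_nonneg_right hL' hK0.le
        nlinarith [hdiv]
      calc dist (F (z 0)) (F (z n)) ≤ dist (F (z 0)) (F (z j)) + dist (F (z j)) (F (z n)) :=
            dist_triangle _ _ _
        _ ≤ S + S * ((s n - K) / K + 1) := add_le_add hF0j htail'
        _ = S * (s n / K + 1) := by field_simp; ring
    · push_neg at hcase
      have hsn : s n ≤ K := hcase n le_rfl
      have hd : dist (z 0) (z n) ≤ 2 * K :=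
        le_trans (dist_le_range_sum_dist z n) (by linarith)
      have h1 : dist (F (z 0)) (F (z n)) ≤ S := hb _ _ hd
      have h2 : S ≤ S * (s n / K + 1) := by
        have : 0 ≤ s n / K := div_nonneg (hsnonneg n) hK0.le
        nlinarith
      exact h1.trans h2

theorem bornologous_on_large_scale_geodesic_is_lipschitz_for_large_distances
    {X Y : Type*} [MetricSpace X] [MetricSpace Y] (F : X → Y)
    (hborn : ∀ R > (0 : ℝ), ∃ S > (0 : ℝ), ∀ x x' : X, dist x x' ≤ R → dist (F x) (F x') ≤ S)
    (hgeo : ∃ K : ℝ, 1 ≤ K ∧ ∀ x y : X, ∃ (n : ℕ) (z : ℕ → X), z 0 = x ∧ z n = y ∧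
      (∀ i < n, dist (z i) (z (i + 1)) ≤ K) ∧
      (∑ i ∈ Finset.range n, dist (z i) (z (i + 1))) ≤ K * dist x y) :
    ∃ K : ℝ, 1 ≤ K ∧ ∀ x x' : X, K ≤ dist x x' → dist (F x) (F x') ≤ K * dist x x' := by
  obtain ⟨K1, hK1, hchain⟩ := hgeo
  have hK10 : (0 : ℝ) < K1 := lt_of_lt_of_le one_pos hK1
  obtain ⟨S, hS, hb⟩ := hborn (2 * K1) (by linarith)
  refine ⟨max 1 (2 * S), le_max_left _ _, ?_⟩
  intro x x' hd
  set C := max 1 (2 * S) with hC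
  have hd1 : (1 : ℝ) ≤ dist x x' := le_trans (le_max_left _ _) hd
  obtain ⟨n, z, hz0, hzn, hsteps, hsum⟩ := hchain x x'
  have hmain := chain_bound F K1 S hK1 hS (fun a b h => hb a b h) n z hsteps
  rw [hz0, hzn] at hmain
  have hdivle : (∑ i ∈ Finset.range n, dist (z i) (z (i + 1))) / K1 ≤ dist x x' := by
    rw [div_le_iff₀ hK10]
    linarith [hsum, mul_comm K1 (dist x x')]
  have h2 : dist (F x) (F x') ≤ S * (dist x x' + 1) := by
    refine hmain.trans ?_
    nlinarith
  have h3 : S * (dist x x' + 1) ≤ 2 * S * dist x x' := by nlinarith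
  have h4 : 2 * S * dist x x' ≤ C * dist x x' := by
    have : 2 * S ≤ C := le_max_right _ _
    nlinarith
  linarith
end
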